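/- arXiv:1706.05550 — 8 statements merged into one kernel-verified Lean document; each statement's English description precedes it below -/
import Mathlib

section
/- For the path P_5 on 5 vertices, dim_f^4(P_5) = 5; in particular dim_f^4(P_5) = 5 > 4 = 4·dim_f(P_5), so the inequality dim_f^k(G) ≥ k·dim_f(G) can be strict. -/
open Finset

namespace FracDim

variable {V : Type*}

/-- `R{x,y}`: the set of vertices `z` with `d(x,z) ≠ d(y,z)`. -/
noncomputable def resSet [Fintype V] (G : SimpleGraph V) (x y : V) : Finset V :=
  Finset.univ.filter (fun z => G.dist x z ≠ G.dist y z)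

/-- `κ(G) = min { |R{x,y}| : x ≠ y }`. -/
noncomputable def kappa [Fintype V] (G : SimpleGraph V) : ℕ :=
  sInf {n : ℕ | ∃ x y : V, x ≠ y ∧ (resSet G x y).card = n}

/-- A `k`-resolving function: `g : V → [0,1]` with `g(R{x,y}) ≥ k` for all distinct `x, y`. -/
def IsKResolving [Fintype V] (G : SimpleGraph V) (k : ℝ) (g : V → ℝ) : Prop :=
  (∀ v, 0 ≤ g v ∧ g v ≤ 1) ∧
    ∀ x y : V, x ≠ y → k ≤ ∑ z ∈ resSet G x y, g z

/-- The fractional `k`-metric dimension of `G`. -/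
noncomputable def fracKDim [Fintype V] (G : SimpleGraph V) (k : ℝ) : ℝ :=
  sInf {s : ℝ | ∃ g : V → ℝ, IsKResolving G k g ∧ s = ∑ v, g v}

/-- The fractional metric dimension of `G`. -/
noncomputable def fracDim [Fintype V] (G : SimpleGraph V) : ℝ :=
  fracKDim G 1

end FracDim


section PathDist
open SimpleGraph

lemma walk_len_lb : ∀ {u v : Fin 5} (w : (pathGraph 5).Walk u v),
    |(u.val : ℤ) - v.val| ≤ w.length := by
  intro u v w
  induction w with
  | nil => simp
  | @cons a b c h p ih =>
      have hab : (a.val:ℤ) - b.val = 1 ∨ (a.val:ℤ) - b.val = -1 := by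
        rcases (pathGraph_adj.mp h) with h1 | h1 <;> omega
      have hab' : |(a.val : ℤ) - b.val| = 1 := by rcases hab with h1 | h1 <;> simp [h1]
      calc |(a.val : ℤ) - c.val| ≤ |(a.val:ℤ) - b.val| + |(b.val:ℤ) - c.val| := abs_sub_le _ _ _
        _ ≤ 1 + p.length := by rw [hab']; exact add_le_add le_rfl ih
        _ = (SimpleGraph.Walk.cons h p).length := by simp [SimpleGraph.Walk.length_cons]; ring

lemma dist_lb (u v : Fin 5) : |(u.val : ℤ) - v.val| ≤ (pathGraph 5).dist u v := by
  obtain ⟨w, hw⟩ := (pathGraph_connected 4).exists_walk_length_eq_dist u v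
  simpa [hw] using walk_len_lb w

lemma adj_dist {u v : Fin 5} (h : u.val + 1 = v.val) : (pathGraph 5).dist u v = 1 :=
  dist_eq_one_iff_adj.mpr (pathGraph_adj.mpr (Or.inl h))

lemma path5_dist (u v : Fin 5) :
    (pathGraph 5).dist u v = (u.val - v.val) + (v.val - u.val) := by
  have conn := pathGraph_connected 4
  have d01 : (pathGraph 5).dist (0:Fin 5) 1 = 1 := adj_dist rfl
  have d12 : (pathGraph 5).dist (1:Fin 5) 2 = 1 := adj_dist rfl
  have d23 : (pathGraph 5).dist (2:Fin 5) 3 = 1 := adj_dist rfl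
  have d34 : (pathGraph 5).dist (3:Fin 5) 4 = 1 := adj_dist rfl
  have t : ∀ a b c : Fin 5, (pathGraph 5).dist a c ≤ (pathGraph 5).dist a b + (pathGraph 5).dist b c :=
    fun a b c => conn.dist_triangle
  have d02 : (pathGraph 5).dist (0:Fin 5) 2 ≤ 2 := by have := t 0 1 2; omega
  have d13 : (pathGraph 5).dist (1:Fin 5) 3 ≤ 2 := by have := t 1 2 3; omega
  have d24 : (pathGraph 5).dist (2:Fin 5) 4 ≤ 2 := by have := t 2 3 4; omega
  have d03 : (pathGraph 5).dist (0:Fin 5) 3 ≤ 3 := by have := t 0 2 3; omega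
  have d14 : (pathGraph 5).dist (1:Fin 5) 4 ≤ 3 := by have := t 1 3 4; omega
  have d04 : (pathGraph 5).dist (0:Fin 5) 4 ≤ 4 := by have := t 0 3 4; omega
  have lb := dist_lb u v
  have lb1 : (u.val:ℤ) - v.val ≤ ((pathGraph 5).dist u v : ℤ) := le_trans (le_abs_self _) lb
  have lb2 : (v.val:ℤ) - u.val ≤ ((pathGraph 5).dist u v : ℤ) :=
    le_trans (by rw [abs_sub_comm]; exact le_abs_self _) lb
  clear lb
  have cm : ∀ a b : Fin 5, (pathGraph 5).dist a b = (pathGraph 5).dist b a := fun a b => dist_comm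
  have ds : ∀ a : Fin 5, (pathGraph 5).dist a a = 0 := fun a => SimpleGraph.dist_self
  have s10 : (pathGraph 5).dist (1:Fin 5) 0 = (pathGraph 5).dist (0:Fin 5) 1 := cm _ _
  have s20 : (pathGraph 5).dist (2:Fin 5) 0 = (pathGraph 5).dist (0:Fin 5) 2 := cm _ _
  have s30 : (pathGraph 5).dist (3:Fin 5) 0 = (pathGraph 5).dist (0:Fin 5) 3 := cm _ _
  have s40 : (pathGraph 5).dist (4:Fin 5) 0 = (pathGraph 5).dist (0:Fin 5) 4 := cm _ _
  have s21 : (pathGraph 5).dist (2:Fin 5) 1 = (pathGraph 5).dist (1:Fin 5) 2 := cm _ _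
  have s31 : (pathGraph 5).dist (3:Fin 5) 1 = (pathGraph 5).dist (1:Fin 5) 3 := cm _ _
  have s41 : (pathGraph 5).dist (4:Fin 5) 1 = (pathGraph 5).dist (1:Fin 5) 4 := cm _ _
  have s32 : (pathGraph 5).dist (3:Fin 5) 2 = (pathGraph 5).dist (2:Fin 5) 3 := cm _ _
  have s42 : (pathGraph 5).dist (4:Fin 5) 2 = (pathGraph 5).dist (2:Fin 5) 4 := cm _ _
  have s43 : (pathGraph 5).dist (4:Fin 5) 3 = (pathGraph 5).dist (3:Fin 5) 4 := cm _ _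
  fin_cases u <;> fin_cases v <;>
    simp only [show (⟨0, by omega⟩ : Fin 5) = 0 from rfl,
      show (⟨1, by omega⟩ : Fin 5) = 1 from rfl,
      show (⟨2, by omega⟩ : Fin 5) = 2 from rfl,
      show (⟨3, by omega⟩ : Fin 5) = 3 from rfl,
      show (⟨4, by omega⟩ : Fin 5) = 4 from rfl,
      show ((0 : Fin 5)).val = 0 from rfl,
      show ((1 : Fin 5)).val = 1 from rfl,
      show ((2 : Fin 5)).val = 2 from rfl,
      show ((3 : Fin 5)).val = 3 from rfl,
      show ((4 : Fin 5)).val = 4 from rfl,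
      Nat.cast_ofNat, Nat.cast_zero, Nat.cast_one] at lb1 lb2 ⊢ <;>
    (first
      | (have := ds 0; omega)
      | (have := ds 1; omega)
      | (have := ds 2; omega)
      | (have := ds 3; omega)
      | (have := ds 4; omega)
      | omega)

end PathDist

section Main
open SimpleGraph FracDim

lemma mem_resSet {x y z : Fin 5} :
    z ∈ resSet (SimpleGraph.pathGraph 5) x y ↔
      (x.val - z.val) + (z.val - x.val) ≠ (y.val - z.val) + (z.val - y.val) := by
  simp [resSet, path5_dist]

lemma resSet_eq (x y : Fin 5) :
    resSet (SimpleGraph.pathGraph 5) x y =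
      Finset.univ.filter
        (fun z => (x.val - z.val) + (z.val - x.val) ≠ (y.val - z.val) + (z.val - y.val)) := by
  ext z
  simp only [mem_resSet, Finset.mem_filter, Finset.mem_univ, true_and]

lemma R02 : resSet (SimpleGraph.pathGraph 5) 0 2 = ({0,2,3,4} : Finset (Fin 5)) := by
  rw [resSet_eq]; decide

lemma R24 : resSet (SimpleGraph.pathGraph 5) 2 4 = ({0,1,2,4} : Finset (Fin 5)) := by
  rw [resSet_eq]; decide

lemma card_resSet_ge {x y : Fin 5} (h : x ≠ y) :
    4 ≤ (resSet (SimpleGraph.pathGraph 5) x y).card := by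
  rw [resSet_eq]
  revert h
  revert x y
  decide

lemma endpoints_mem {x y : Fin 5} (h : x ≠ y) :
    (0 : Fin 5) ∈ resSet (SimpleGraph.pathGraph 5) x y ∧
      (4 : Fin 5) ∈ resSet (SimpleGraph.pathGraph 5) x y := by
  have hv : x.val ≠ y.val := fun hc => h (Fin.ext hc)
  have hx := x.isLt
  have hy := y.isLt
  have h0 : ((0:Fin 5)).val = 0 := rfl
  have h4 : ((4:Fin 5)).val = 4 := rfl
  constructor <;> rw [mem_resSet] <;> simp only [h0, h4] <;> omega

open FracDim in
/-- For the path `P₅` on 5 vertices, `dim_f^4(P₅) = 5`; in particular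
`dim_f^4(P₅) = 5 > 4 = 4 · dim_f(P₅)`, so the inequality `dim_f^k(G) ≥ k · dim_f(G)`
can be strict. -/
theorem fracKDim_path_five :
    fracKDim (SimpleGraph.pathGraph 5) 4 = 5 ∧
      4 * fracDim (SimpleGraph.pathGraph 5) = 4 ∧
      4 * fracDim (SimpleGraph.pathGraph 5) < fracKDim (SimpleGraph.pathGraph 5) 4 := by
  set G := SimpleGraph.pathGraph 5 with hG
  -- Part 1 : fracKDim G 4 = 5
  have mem1 : (5 : ℝ) ∈ {s : ℝ | ∃ g : Fin 5 → ℝ, IsKResolving G 4 g ∧ s = ∑ v, g v} := by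
    refine ⟨fun _ => 1, ⟨fun v => by norm_num, ?_⟩, by simp⟩
    intro x y hxy
    have hc := card_resSet_ge hxy
    rw [Finset.sum_const, nsmul_eq_mul, mul_one]
    exact_mod_cast hc
  have lb1 : ∀ s ∈ {s : ℝ | ∃ g : Fin 5 → ℝ, IsKResolving G 4 g ∧ s = ∑ v, g v}, (5:ℝ) ≤ s := by
    rintro s ⟨g, ⟨hb, hres⟩, rfl⟩
    have h1 := hres 0 2 (by decide)
    have h2 := hres 2 4 (by decide)
    rw [R02] at h1
    rw [R24] at h2
    have e1 : ∑ z ∈ ({0,2,3,4} : Finset (Fin 5)), g z = g 0 + g 2 + g 3 + g 4 := by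
      rw [show ({0,2,3,4} : Finset (Fin 5)) = insert 0 (insert 2 (insert 3 {4})) from rfl,
        Finset.sum_insert (by decide), Finset.sum_insert (by decide),
        Finset.sum_insert (by decide), Finset.sum_singleton]
      ring
    have e2 : ∑ z ∈ ({0,1,2,4} : Finset (Fin 5)), g z = g 0 + g 1 + g 2 + g 4 := by
      rw [show ({0,1,2,4} : Finset (Fin 5)) = insert 0 (insert 1 (insert 2 {4})) from rfl,
        Finset.sum_insert (by decide), Finset.sum_insert (by decide),
        Finset.sum_insert (by decide), Finset.sum_singleton]
      ring
    rw [e1] at h1; rw [e2] at h2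
    have b0 := hb 0; have b1 := hb 1; have b2 := hb 2; have b3 := hb 3; have b4 := hb 4
    rw [Fin.sum_univ_five]
    linarith [b0.1, b0.2, b1.1, b1.2, b2.1, b2.2, b3.1, b3.2, b4.1, b4.2]
  have part1 : fracKDim G 4 = 5 := by
    refine le_antisymm (csInf_le ⟨5, lb1⟩ mem1) (le_csInf ⟨5, mem1⟩ lb1)
  -- Part 2 : fracDim G = 1
  have mem2 : (1 : ℝ) ∈ {s : ℝ | ∃ g : Fin 5 → ℝ, IsKResolving G 1 g ∧ s = ∑ v, g v} := by
    refine ⟨fun v => if v = 0 ∨ v = 4 then 1/2 else 0, ⟨fun v => by by_cases h : v = 0 ∨ v = 4 <;> simp [h] <;> norm_num, ?_⟩, ?_⟩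
    · intro x y hxy
      obtain ⟨m0, m4⟩ := endpoints_mem hxy
      have hsub : ({0, 4} : Finset (Fin 5)) ⊆ resSet G x y := by
        intro z hz
        rcases Finset.mem_insert.mp hz with rfl | hz
        · exact m0
        · rw [Finset.mem_singleton] at hz; subst hz; exact m4
      have hle := Finset.sum_le_sum_of_subset_of_nonneg
        (f := fun v => if v = 0 ∨ v = 4 then (1:ℝ)/2 else 0) hsub
        (fun i _ _ => by by_cases h : i = 0 ∨ i = 4 <;> simp [h] <;> norm_num)
      refine le_trans ?_ hle
      rw [show ({0,4} : Finset (Fin 5)) = insert 0 {4} from rfl,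
        Finset.sum_insert (by decide), Finset.sum_singleton]
      norm_num
    · rw [Fin.sum_univ_five]
      norm_num [Fin.ext_iff, show ((4:Fin 5)).val = 4 from rfl,
        show ((3:Fin 5)).val = 3 from rfl, show ((2:Fin 5)).val = 2 from rfl,
        show ((1:Fin 5)).val = 1 from rfl, show ((0:Fin 5)).val = 0 from rfl]
  have lb2 : ∀ s ∈ {s : ℝ | ∃ g : Fin 5 → ℝ, IsKResolving G 1 g ∧ s = ∑ v, g v}, (1:ℝ) ≤ s := by
    rintro s ⟨g, ⟨hb, hres⟩, rfl⟩
    have h1 := hres 0 1 (by decide)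
    refine le_trans h1 (Finset.sum_le_sum_of_subset_of_nonneg (Finset.subset_univ _)
      (fun i _ _ => (hb i).1))
  have part2 : fracDim G = 1 := by
    rw [fracDim]
    exact le_antisymm (csInf_le ⟨1, lb2⟩ mem2) (le_csInf ⟨1, mem2⟩ lb2)
  refine ⟨part1, by rw [part2]; norm_num, by rw [part1, part2]; norm_num⟩

end Main
end

section
/- Let G be a finite simple connected graph and let k be a real number with 1 < k ≤ κ(G). If there exists a resolving function g : V(G) → [0,1] with Σ_{v ∈ V(G)} g(v) = dim_f(G) such that g(v) ≤ 1/k for every vertex v of G, then dim_f^k(G) = k·dim_f(G). -/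
open Finset

open FracDim in
/-- If `1 < k ≤ κ(G)` and there is a minimum resolving function `g` of `G`
(i.e. a resolving function with `Σ g = dim_f(G)`) with `g(v) ≤ 1/k` for every vertex `v`,
then `dim_f^k(G) = k · dim_f(G)`. -/
theorem fracKDim_eq_mul_of_minResolving {V : Type*} [Fintype V] (G : SimpleGraph V)
    (hG : G.Connected) (k : ℝ) (hk1 : 1 < k) (hk2 : k ≤ (kappa G : ℝ))
    (g : V → ℝ) (hg : IsKResolving G 1 g) (hmin : ∑ v, g v = fracDim G)
    (hle : ∀ v, g v ≤ 1 / k) :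
    fracKDim G k = k * fracDim G := by
  have hk0 : (0:ℝ) < k := lt_trans one_pos hk1
  have hkg : IsKResolving G k (fun v => k * g v) := by
    refine ⟨fun v => ⟨mul_nonneg hk0.le (hg.1 v).1, ?_⟩, fun x y hxy => ?_⟩
    · have h1 := hle v
      calc k * g v ≤ k * (1/k) := by nlinarith [(hg.1 v).1]
        _ = 1 := by field_simp
    · have := hg.2 x y hxy
      rw [← Finset.mul_sum]
      nlinarith
  have hmem : (k * fracDim G) ∈ {s : ℝ | ∃ g : V → ℝ, IsKResolving G k g ∧ s = ∑ v, g v} :=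
    ⟨_, hkg, by rw [← Finset.mul_sum, hmin]⟩
  have hbdd : BddBelow {s : ℝ | ∃ g : V → ℝ, IsKResolving G k g ∧ s = ∑ v, g v} := by
    refine ⟨0, ?_⟩
    rintro s ⟨h, hh, rfl⟩
    exact Finset.sum_nonneg fun v _ => (hh.1 v).1
  have hub : fracKDim G k ≤ k * fracDim G := csInf_le hbdd hmem
  have hlb : k * fracDim G ≤ fracKDim G k := by
    apply le_csInf ⟨_, hmem⟩
    rintro s ⟨h, hh, rfl⟩
    have h1 : IsKResolving G 1 (fun v => h v / k) := by
      refine ⟨fun v => ⟨div_nonneg (hh.1 v).1 hk0.le, ?_⟩, fun x y hxy => ?_⟩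
      · rw [div_le_one hk0]
        linarith [(hh.1 v).2]
      · have := hh.2 x y hxy
        rw [← Finset.sum_div, le_div_iff₀ hk0, one_mul]
        linarith
    have hle2 : fracDim G ≤ ∑ v, h v / k := by
      apply csInf_le
      · refine ⟨0, ?_⟩
        rintro s ⟨f, hf, rfl⟩
        exact Finset.sum_nonneg fun v _ => (hf.1 v).1
      · exact ⟨_, h1, rfl⟩
    rw [← Finset.sum_div, le_div_iff₀ hk0] at hle2
    linarith
  linarith
end

section
/- Let G be a finite simple connected graph. If there exists a resolving function g : V(G) → [0,1] with Σ_{v ∈ V(G)} g(v) = dim_f(G) such that g(v) ≤ 1/κ(G) for every vertex v of G, then dim_f^k(G) = k·dim_f(G) for every real number k with 1 < k ≤ κ(G). -/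
open Finset

open FracDim in
/-- If there is a minimum resolving function `g` of `G` with `g(v) ≤ 1/κ(G)` for every
vertex `v`, then `dim_f^k(G) = k · dim_f(G)` for every real `k` with `1 < k ≤ κ(G)`. -/
theorem fracKDim_eq_mul_of_minResolving_le_inv_kappa {V : Type*} [Fintype V]
    (G : SimpleGraph V) (hG : G.Connected)
    (g : V → ℝ) (hg : IsKResolving G 1 g) (hmin : ∑ v, g v = fracDim G)
    (hle : ∀ v, g v ≤ 1 / (kappa G : ℝ)) :
    ∀ k : ℝ, 1 < k → k ≤ (kappa G : ℝ) → fracKDim G k = k * fracDim G := by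
  intro k hk1 hkκ
  have hkpos : (0:ℝ) < k := lt_trans one_pos hk1
  have hκpos : (0:ℝ) < (kappa G : ℝ) := lt_of_lt_of_le hkpos hkκ
  have bdd : ∀ k' : ℝ,
      BddBelow {s : ℝ | ∃ g : V → ℝ, IsKResolving G k' g ∧ s = ∑ v, g v} := by
    intro k'
    refine ⟨0, ?_⟩
    rintro s ⟨h, hh, rfl⟩
    exact Finset.sum_nonneg (fun v _ => (hh.1 v).1)
  have hmem : (∑ v, k * g v) ∈
      {s : ℝ | ∃ g : V → ℝ, IsKResolving G k g ∧ s = ∑ v, g v} := by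
    refine ⟨fun v => k * g v, ⟨fun v => ⟨mul_nonneg hkpos.le (hg.1 v).1, ?_⟩,
      fun x y hxy => ?_⟩, rfl⟩
    · calc k * g v ≤ k * (1 / (kappa G : ℝ)) :=
            mul_le_mul_of_nonneg_left (hle v) hkpos.le
        _ ≤ (kappa G : ℝ) * (1 / (kappa G : ℝ)) :=
            mul_le_mul_of_nonneg_right hkκ (by positivity)
        _ = 1 := mul_one_div_cancel hκpos.ne'
    · rw [← Finset.mul_sum]
      calc k = k * 1 := (mul_one k).symm
        _ ≤ k * ∑ z ∈ resSet G x y, g z :=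
            mul_le_mul_of_nonneg_left (hg.2 x y hxy) hkpos.le
  have hsum : ∑ v, k * g v = k * fracDim G := by rw [← Finset.mul_sum, hmin]
  apply le_antisymm
  · have := csInf_le (bdd k) hmem
    rwa [hsum] at this
  · apply le_csInf ⟨_, hmem⟩
    rintro s ⟨h, hh, rfl⟩
    have hmem1 : (∑ v, h v / k) ∈
        {s : ℝ | ∃ g : V → ℝ, IsKResolving G 1 g ∧ s = ∑ v, g v} := by
      refine ⟨fun v => h v / k, ⟨fun v => ⟨div_nonneg (hh.1 v).1 hkpos.le, ?_⟩,
        fun x y hxy => ?_⟩, rfl⟩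
      · calc h v / k ≤ 1 / k := by gcongr; exact (hh.1 v).2
          _ ≤ 1 := by rw [div_le_one hkpos]; exact hk1.le
      · rw [← Finset.sum_div]
        exact (one_le_div hkpos).mpr (hh.2 x y hxy)
    have hle' : fracDim G ≤ ∑ v, h v / k := csInf_le (bdd 1) hmem1
    rw [← Finset.sum_div] at hle'
    calc k * fracDim G ≤ k * ((∑ v, h v) / k) :=
          mul_le_mul_of_nonneg_left hle' hkpos.le
      _ = ∑ v, h v := mul_div_cancel₀ _ hkpos.ne'
end

section
/- Let G be a finite simple connected graph of order n ≥ 2 and let k be a real number with 1 ≤ k ≤ κ(G). Then dim_f^k(G) = k if and only if G is isomorphic to the path P_n and 1 ≤ k ≤ 2. -/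
open Finset

namespace FracDimAux

variable {V : Type*} [Fintype V] {G : SimpleGraph V} {z : V}

/-- A finset of naturals closed under predecessor is an initial segment. -/
lemma eq_range_of_pred_closed (S : Finset ℕ) (h : ∀ m, m + 1 ∈ S → m ∈ S) :
    S = Finset.range S.card := by
  have aux : ∀ d m, m + d ∈ S → m ∈ S := by
    intro d
    induction d with
    | zero => exact fun m hm => hm
    | succ d ih =>
        intro m hm
        exact ih m (h _ hm)
  rcases S.eq_empty_or_nonempty with rfl | hS
  · simp
  · have heq : S = Finset.range (S.max' hS + 1) := by
      apply Finset.Subset.antisymm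
      · exact fun x hx => Finset.mem_range.mpr (Nat.lt_succ_of_le (S.le_max' x hx))
      · intro j hj
        have hj' := Nat.lt_succ_iff.mp (Finset.mem_range.mp hj)
        have : j + (S.max' hS - j) ∈ S := by
          rw [Nat.add_sub_cancel' hj']
          exact S.max'_mem hS
        exact aux _ _ this
    rw [heq, Finset.card_range]

/-- Predecessor on a shortest path. -/
lemma pred_exists (hc : G.Connected) {v : V} {m : ℕ} (hv : G.dist z v = m + 1) :
    ∃ u, G.Adj u v ∧ G.dist z u = m := by
  obtain ⟨p, hp⟩ := hc.exists_walk_length_eq_dist z v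
  have hql : p.reverse.length = m + 1 := by
    rw [SimpleGraph.Walk.length_reverse, hp, hv]
  cases hq : p.reverse with
  | nil => rw [hq] at hql; simp at hql
  | @cons _ u _ h t =>
      rw [hq] at hql
      simp only [SimpleGraph.Walk.length_cons, Nat.add_right_cancel_iff] at hql
      refine ⟨u, h.symm, ?_⟩
      have h1 : G.dist z u ≤ m := by
        rw [SimpleGraph.dist_comm]
        exact hql ▸ SimpleGraph.dist_le t
      have h2 : G.dist z v ≤ G.dist z u + G.dist u v := hc.dist_triangle
      have h3 : G.dist u v = 1 := SimpleGraph.dist_eq_one_iff_adj.mpr h.symm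
      omega

lemma image_dist_eq (hc : G.Connected) (hz : Function.Injective (G.dist z)) :
    Finset.univ.image (G.dist z) = Finset.range (Fintype.card V) := by
  classical
  have hcard : (Finset.univ.image (G.dist z)).card = Fintype.card V := by
    rw [Finset.card_image_of_injective _ hz, Finset.card_univ]
  rw [← hcard]
  apply eq_range_of_pred_closed
  intro m hm
  obtain ⟨v, _, hv⟩ := Finset.mem_image.mp hm
  obtain ⟨u, _, hu⟩ := pred_exists hc hv
  exact Finset.mem_image.mpr ⟨u, Finset.mem_univ u, hu⟩

lemma dist_lt_card (hc : G.Connected) (hz : Function.Injective (G.dist z)) (v : V) :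
    G.dist z v < Fintype.card V := by
  classical
  have := image_dist_eq hc hz
  have hv : G.dist z v ∈ Finset.univ.image (G.dist z) :=
    Finset.mem_image.mpr ⟨v, Finset.mem_univ v, rfl⟩
  rw [this] at hv
  exact Finset.mem_range.mp hv

lemma exists_dist_eq (hc : G.Connected) (hz : Function.Injective (G.dist z))
    {m : ℕ} (hm : m < Fintype.card V) : ∃ v, G.dist z v = m := by
  classical
  have := image_dist_eq hc hz
  have : m ∈ Finset.univ.image (G.dist z) := this ▸ Finset.mem_range.mpr hm
  obtain ⟨v, _, hv⟩ := Finset.mem_image.mp this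
  exact ⟨v, hv⟩

lemma adj_iff (hc : G.Connected) (hz : Function.Injective (G.dist z)) (u v : V) :
    G.Adj u v ↔ (G.dist z u + 1 = G.dist z v ∨ G.dist z v + 1 = G.dist z u) := by
  constructor
  · intro h
    have h1 : G.dist u v = 1 := SimpleGraph.dist_eq_one_iff_adj.mpr h
    have h2 : G.dist z v ≤ G.dist z u + G.dist u v := hc.dist_triangle
    have h3 : G.dist z u ≤ G.dist z v + G.dist v u := hc.dist_triangle
    have h4 : G.dist v u = 1 := SimpleGraph.dist_eq_one_iff_adj.mpr h.symm
    have h5 : G.dist z u ≠ G.dist z v := fun hh => h.ne (hz hh)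
    omega
  · rintro (h | h)
    · obtain ⟨u', hadj, hu'⟩ := pred_exists hc h.symm
      rwa [hz hu'] at hadj
    · obtain ⟨v', hadj, hv'⟩ := pred_exists hc h.symm
      exact (by rwa [hz hv'] at hadj : G.Adj v u).symm

lemma dist_le_sub (hc : G.Connected) (hz : Function.Injective (G.dist z)) :
    ∀ (d : ℕ) (u v : V), G.dist z v = G.dist z u + d → G.dist u v ≤ d := by
  intro d
  induction d with
  | zero =>
      intro u v h
      have : v = u := hz (by omega)
      simp [this]
  | succ d ih =>
      intro u v h
      obtain ⟨u', hadj, hu'⟩ := pred_exists hc (by omega : G.dist z v = (G.dist z u + d) + 1)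
      have h1 : G.dist u u' ≤ d := ih u u' hu'
      have h2 : G.dist u v ≤ G.dist u u' + G.dist u' v := hc.dist_triangle
      have h3 : G.dist u' v = 1 := SimpleGraph.dist_eq_one_iff_adj.mpr hadj
      omega

lemma dist_formula (hc : G.Connected) (hz : Function.Injective (G.dist z))
    {u v : V} (h : G.dist z u ≤ G.dist z v) :
    G.dist u v = G.dist z v - G.dist z u := by
  have h1 : G.dist u v ≤ G.dist z v - G.dist z u :=
    dist_le_sub hc hz _ u v (by omega)
  have h2 : G.dist z v ≤ G.dist z u + G.dist u v := hc.dist_triangle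
  omega

lemma antipode_inj (hc : G.Connected) (hz : Function.Injective (G.dist z))
    {w : V} (hw : G.dist z w = Fintype.card V - 1) :
    Function.Injective (G.dist w) := by
  have key : ∀ v, G.dist w v = Fintype.card V - 1 - G.dist z v := by
    intro v
    have hv : G.dist z v < Fintype.card V := dist_lt_card hc hz v
    rw [SimpleGraph.dist_comm]
    rw [dist_formula hc hz (by omega : G.dist z v ≤ G.dist z w), hw]
  intro a b hab
  rw [key a, key b] at hab
  have ha := dist_lt_card hc hz a
  have hb := dist_lt_card hc hz b
  exact hz (by omega)

lemma inj_coord (hc : G.Connected) (hz : Function.Injective (G.dist z))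
    (hn : 2 ≤ Fintype.card V) {v : V} (hv : Function.Injective (G.dist v)) :
    G.dist z v = 0 ∨ G.dist z v = Fintype.card V - 1 := by
  obtain ⟨u, hu⟩ := exists_dist_eq hc hv (by omega : Fintype.card V - 1 < Fintype.card V)
  have hvu : G.dist z u < Fintype.card V := dist_lt_card hc hz u
  have hvv : G.dist z v < Fintype.card V := dist_lt_card hc hz v
  rcases le_or_gt (G.dist z v) (G.dist z u) with h | h
  · have := dist_formula hc hz h
    rw [this] at hu
    omega
  · have := dist_formula hc hz h.le
    rw [SimpleGraph.dist_comm, this] at hu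
    omega

/-- Construct the isomorphism to the path graph. -/
lemma iso_of_inj (hc : G.Connected) (hz : Function.Injective (G.dist z)) :
    Nonempty (G ≃g SimpleGraph.pathGraph (Fintype.card V)) := by
  classical
  have hinj : Function.Injective (fun v : V => (⟨G.dist z v, dist_lt_card hc hz v⟩ :
      Fin (Fintype.card V))) := by
    intro a b hab
    exact hz (by simpa [Fin.mk.injEq] using hab)
  have hbij : Function.Bijective (fun v : V => (⟨G.dist z v, dist_lt_card hc hz v⟩ :
      Fin (Fintype.card V))) := by
    rw [Fintype.bijective_iff_injective_and_card]
    exact ⟨hinj, by simp⟩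
  refine ⟨⟨Equiv.ofBijective _ hbij, ?_⟩⟩
  intro a b
  rw [SimpleGraph.pathGraph_adj]
  show _ ↔ G.Adj a b
  rw [adj_iff hc hz a b]
  simp only [Equiv.ofBijective, Equiv.coe_fn_mk]


/-- Homomorphism decreases distance (given source connected). -/
lemma dist_map_le {W : Type*} {G' : SimpleGraph W} (f : G →g G') (hc : G.Connected)
    (u v : V) : G'.dist (f u) (f v) ≤ G.dist u v := by
  obtain ⟨p, hp⟩ := hc.exists_walk_length_eq_dist u v
  calc G'.dist (f u) (f v) ≤ (p.map f).length := SimpleGraph.dist_le _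
    _ = p.length := by simp
    _ = G.dist u v := hp

lemma pathGraph_val_le {n : ℕ} : ∀ {a b : Fin n} (p : (SimpleGraph.pathGraph n).Walk a b),
    (b : ℕ) ≤ (a : ℕ) + p.length := by
  intro a b p
  induction p with
  | nil => simp
  | @cons x y w h q ih =>
      rw [SimpleGraph.pathGraph_adj] at h
      simp only [SimpleGraph.Walk.length_cons]
      omega

lemma pathGraph_connected' {n : ℕ} (hn : 1 ≤ n) : (SimpleGraph.pathGraph n).Connected := by
  obtain ⟨m, rfl⟩ : ∃ m, n = m + 1 := ⟨n - 1, by omega⟩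
  exact SimpleGraph.pathGraph_connected m

lemma pathGraph_dist_zero {n : ℕ} (h0 : 0 < n) (j : Fin n) :
    (SimpleGraph.pathGraph n).dist ⟨0, h0⟩ j = (j : ℕ) := by
  have hub : ∀ (jv : ℕ) (hj : jv < n),
      (SimpleGraph.pathGraph n).dist ⟨0, h0⟩ ⟨jv, hj⟩ ≤ jv := by
    intro jv
    induction jv with
    | zero => intro hj; simp
    | succ m ih =>
        intro hj
        have hadj : (SimpleGraph.pathGraph n).Adj ⟨m, by omega⟩ ⟨m + 1, hj⟩ := by
          rw [SimpleGraph.pathGraph_adj]; left; rfl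
        calc (SimpleGraph.pathGraph n).dist ⟨0, h0⟩ ⟨m + 1, hj⟩
            ≤ (SimpleGraph.pathGraph n).dist ⟨0, h0⟩ ⟨m, by omega⟩ +
              (SimpleGraph.pathGraph n).dist ⟨m, by omega⟩ ⟨m + 1, hj⟩ :=
              (pathGraph_connected' (by omega)).dist_triangle
          _ ≤ m + 1 := by
              have := SimpleGraph.dist_eq_one_iff_adj.mpr hadj
              have := ih (by omega)
              omega
  have hlb : (j : ℕ) ≤ (SimpleGraph.pathGraph n).dist ⟨0, h0⟩ j := by
    obtain ⟨p, hp⟩ := (pathGraph_connected' (by omega)).exists_walk_length_eq_dist ⟨0, h0⟩ j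
    have := pathGraph_val_le p
    simp only [hp] at this
    simpa using this
  have := hub (j : ℕ) j.isLt
  have hj : (⟨(j : ℕ), j.isLt⟩ : Fin n) = j := Fin.ext rfl
  rw [hj] at this
  omega

/-- From an isomorphism to the path graph, get a vertex with injective distance. -/
lemma inj_of_iso (hc : G.Connected) (hn : 2 ≤ Fintype.card V)
    (e : G ≃g SimpleGraph.pathGraph (Fintype.card V)) :
    ∃ z : V, Function.Injective (G.dist z) := by
  have h0 : 0 < Fintype.card V := by omega
  refine ⟨e.symm ⟨0, h0⟩, ?_⟩
  have hpc : (SimpleGraph.pathGraph (Fintype.card V)).Connected := pathGraph_connected' (by omega)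
  have hdist : ∀ v : V, G.dist (e.symm ⟨0, h0⟩) v = ((e v : Fin (Fintype.card V)) : ℕ) := by
    intro v
    have h1 : (SimpleGraph.pathGraph (Fintype.card V)).dist ⟨0, h0⟩ (e v) ≤
        G.dist (e.symm ⟨0, h0⟩) v := by
      simpa using dist_map_le e.toHom hc (e.symm ⟨0, h0⟩) v
    have h2 : G.dist (e.symm ⟨0, h0⟩) v ≤
        (SimpleGraph.pathGraph (Fintype.card V)).dist ⟨0, h0⟩ (e v) := by
      simpa using dist_map_le e.symm.toHom hpc ⟨0, h0⟩ (e v)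
    have h3 := pathGraph_dist_zero h0 (e v)
    omega
  intro a b hab
  rw [hdist a, hdist b] at hab
  exact e.injective (Fin.ext hab)

lemma sum_biUnion_le_sum {A B : Type*} [DecidableEq A] [DecidableEq B] (s : Finset A) (t : A → Finset B)
    (g : B → ℝ) (hg : ∀ b, 0 ≤ g b) :
    ∑ v ∈ s.biUnion t, g v ≤ ∑ a ∈ s, ∑ v ∈ t a, g v := by
  induction s using Finset.cons_induction with
  | empty => simp
  | cons a s ha ih =>
      rw [Finset.cons_eq_insert, Finset.biUnion_insert, Finset.sum_insert ha]
      have h1 : ∑ v ∈ t a ∪ s.biUnion t, g v ≤ ∑ v ∈ t a, g v + ∑ v ∈ s.biUnion t, g v := by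
        have h2 := Finset.sum_union_inter (s₁ := t a) (s₂ := s.biUnion t) (f := g)
        have hnn : 0 ≤ ∑ v ∈ t a ∩ s.biUnion t, g v := Finset.sum_nonneg (fun v _ => hg v)
        linarith
      linarith

end FracDimAux


open FracDim in
/-- For a finite simple connected graph `G` of order `n ≥ 2` and a real `k` with
`1 ≤ k ≤ κ(G)`: `dim_f^k(G) = k` iff `G` is isomorphic to the path `P_n` and `k ≤ 2`. -/
theorem fracKDim_eq_k_iff {V : Type*} [Fintype V] (G : SimpleGraph V) (hG : G.Connected)
    (hn : 2 ≤ Fintype.card V) (k : ℝ) (hk1 : 1 ≤ k) (hk2 : k ≤ (kappa G : ℝ)) :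
    fracKDim G k = k ↔
      (Nonempty (G ≃g SimpleGraph.pathGraph (Fintype.card V)) ∧ k ≤ 2) := by
  classical
  obtain ⟨x0, y0, hxy0⟩ := Fintype.exists_pair_of_one_lt_card (by omega : 1 < Fintype.card V)
  have hF1 : ∀ g : V → ℝ, IsKResolving G k g → k ≤ ∑ v, g v := by
    intro g hg
    calc k ≤ ∑ z ∈ resSet G x0 y0, g z := hg.2 x0 y0 hxy0
      _ ≤ ∑ v, g v := Finset.sum_le_sum_of_subset_of_nonneg (Finset.subset_univ _)
          (fun v _ _ => (hg.1 v).1)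
  have hmemcard : ∀ x y : V, x ≠ y → k ≤ ((resSet G x y).card : ℝ) := by
    intro x y hxy
    refine hk2.trans ?_
    have hmem : (resSet G x y).card ∈
        {n : ℕ | ∃ x y : V, x ≠ y ∧ (resSet G x y).card = n} := ⟨x, y, hxy, rfl⟩
    have hk : kappa G ≤ (resSet G x y).card := Nat.sInf_le hmem
    exact_mod_cast hk
  have hone : IsKResolving G k (fun _ => 1) := by
    refine ⟨fun v => ⟨zero_le_one, le_refl 1⟩, fun x y hxy => ?_⟩
    simpa using hmemcard x y hxy
  have hdef : fracKDim G k =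
      sInf {s : ℝ | ∃ g : V → ℝ, IsKResolving G k g ∧ s = ∑ v, g v} := rfl
  have hmem1 : (∑ v : V, (1 : ℝ)) ∈ {s : ℝ | ∃ g : V → ℝ, IsKResolving G k g ∧ s = ∑ v, g v} :=
    ⟨fun _ => 1, hone, rfl⟩
  have hne : {s : ℝ | ∃ g : V → ℝ, IsKResolving G k g ∧ s = ∑ v, g v}.Nonempty := ⟨_, hmem1⟩
  have hbdd : BddBelow {s : ℝ | ∃ g : V → ℝ, IsKResolving G k g ∧ s = ∑ v, g v} :=
    ⟨k, fun s ⟨g, hg, hs⟩ => hs ▸ hF1 g hg⟩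
  have hlow : k ≤ fracKDim G k := by
    rw [hdef]
    exact le_csInf hne (fun s ⟨g, hg, hs⟩ => hs ▸ hF1 g hg)
  constructor
  · intro heq
    have happrox : ∀ ε : ℝ, 0 < ε → ∃ g : V → ℝ, IsKResolving G k g ∧ ∑ v, g v < k + ε := by
      intro ε hε
      have h' : sInf {s : ℝ | ∃ g : V → ℝ, IsKResolving G k g ∧ s = ∑ v, g v} < k + ε := by
        rw [← hdef, heq]; linarith
      obtain ⟨s, ⟨g, hg, hs⟩, hlt⟩ := (csInf_lt_iff hbdd hne).mp h'
      exact ⟨g, hg, by rw [← hs]; exact hlt⟩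
    set S : Finset V := Finset.univ.filter (fun z => Function.Injective (G.dist z)) with hS
    set P : ℕ := (Finset.univ.offDiag : Finset (V × V)).card with hP
    have key : ∀ ε : ℝ, 0 < ε → k ≤ (S.card : ℝ) + P * ε := by
      intro ε hε
      obtain ⟨g, hg, hsum⟩ := happrox ε hε
      have hgpos : ∀ v, 0 ≤ g v := fun v => (hg.1 v).1
      have hcompl : ∀ x y : V, x ≠ y → ∑ v ∈ (resSet G x y)ᶜ, g v ≤ ε := by
        intro x y hxy
        have hsplit : ∑ v ∈ resSet G x y, g v + ∑ v ∈ (resSet G x y)ᶜ, g v = ∑ v, g v :=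
          Finset.sum_add_sum_compl _ _
        have := hg.2 x y hxy
        linarith
      have hcover : ∀ v : V, v ∉ S → ∃ p ∈ (Finset.univ.offDiag : Finset (V × V)),
          v ∈ (resSet G p.1 p.2)ᶜ := by
        intro v hv
        rw [hS, Finset.mem_filter] at hv
        push_neg at hv
        have hni : ¬ Function.Injective (G.dist v) := hv (Finset.mem_univ v)
        rw [Function.not_injective_iff] at hni
        obtain ⟨x, y, hdxy, hxy⟩ := hni
        refine ⟨(x, y), Finset.mem_offDiag.mpr ⟨Finset.mem_univ _, Finset.mem_univ _, hxy⟩, ?_⟩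
        refine Finset.mem_compl.mpr (fun hmem => ?_)
        rw [resSet, Finset.mem_filter] at hmem
        exact hmem.2 (by rw [SimpleGraph.dist_comm, hdxy, SimpleGraph.dist_comm])
      have hSc : ∑ v ∈ Sᶜ, g v ≤ (P : ℝ) * ε := by
        have hsub : Sᶜ ⊆ (Finset.univ.offDiag).biUnion (fun p => (resSet G p.1 p.2)ᶜ) := by
          intro v hv
          obtain ⟨p, hp, hvp⟩ := hcover v (Finset.mem_compl.mp hv)
          exact Finset.mem_biUnion.mpr ⟨p, hp, hvp⟩
        calc ∑ v ∈ Sᶜ, g v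
            ≤ ∑ v ∈ (Finset.univ.offDiag).biUnion (fun p => (resSet G p.1 p.2)ᶜ), g v :=
              Finset.sum_le_sum_of_subset_of_nonneg hsub (fun v _ _ => hgpos v)
          _ ≤ ∑ p ∈ Finset.univ.offDiag, ∑ v ∈ (resSet G p.1 p.2)ᶜ, g v :=
              FracDimAux.sum_biUnion_le_sum _ _ _ hgpos
          _ ≤ ∑ _p ∈ Finset.univ.offDiag, ε :=
              Finset.sum_le_sum (fun p hp => hcompl p.1 p.2 (Finset.mem_offDiag.mp hp).2.2)
          _ = (P : ℝ) * ε := by rw [Finset.sum_const, hP, nsmul_eq_mul]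
      have hSb : ∑ v ∈ S, g v ≤ (S.card : ℝ) := by
        calc ∑ v ∈ S, g v ≤ ∑ _v ∈ S, (1 : ℝ) := Finset.sum_le_sum (fun v _ => (hg.1 v).2)
          _ = S.card := by simp
      have htot : k ≤ ∑ v, g v := hF1 g hg
      have hsplit : ∑ v ∈ S, g v + ∑ v ∈ Sᶜ, g v = ∑ v, g v := Finset.sum_add_sum_compl S g
      linarith
    have hcard : k ≤ (S.card : ℝ) := by
      by_contra hcon
      push_neg at hcon
      set c := (S.card : ℝ) with hc
      have hkc : 0 < k - c := by linarith
      have hd : (0 : ℝ) < 2 * ((P : ℝ) + 1) := by have := Nat.cast_nonneg (α := ℝ) P; linarith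
      set ε := (k - c) / (2 * ((P : ℝ) + 1)) with hεdef
      have hε : 0 < ε := div_pos hkc hd
      have hkey := key ε hε
      have hεval : ε * (2 * ((P : ℝ) + 1)) = k - c := div_mul_cancel₀ _ (ne_of_gt hd)
      have h3 : (k - c) * (2 * ((P : ℝ) + 1)) ≤ (P : ℝ) * ε * (2 * ((P : ℝ) + 1)) :=
        mul_le_mul_of_nonneg_right (by linarith) hd.le
      have h4 : (P : ℝ) * ε * (2 * ((P : ℝ) + 1)) = (P : ℝ) * (k - c) := by
        rw [mul_assoc, hεval]
      nlinarith [mul_pos hkc (by have := Nat.cast_nonneg (α := ℝ) P; linarith : (0 : ℝ) < (P : ℝ) + 2)]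
    have hSne : S.Nonempty := by
      rw [← Finset.card_pos]
      have : (1 : ℝ) ≤ (S.card : ℝ) := le_trans hk1 hcard
      exact_mod_cast lt_of_lt_of_le zero_lt_one this
    obtain ⟨z, hzS⟩ := hSne
    have hz : Function.Injective (G.dist z) := (Finset.mem_filter.mp hzS).2
    refine ⟨FracDimAux.iso_of_inj hG hz, ?_⟩
    obtain ⟨w, hw⟩ := FracDimAux.exists_dist_eq hG hz
      (show Fintype.card V - 1 < Fintype.card V by omega)
    have hsub2 : S ⊆ {z, w} := by
      intro v hv
      have hvinj : Function.Injective (G.dist v) := (Finset.mem_filter.mp hv).2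
      rcases FracDimAux.inj_coord hG hz hn hvinj with h0 | h1
      · have : v = z := hz (by rw [h0, SimpleGraph.dist_self])
        simp [this]
      · have : v = w := hz (by rw [h1, hw])
        simp [this]
    have hle2 : S.card ≤ 2 := by
      refine le_trans (Finset.card_le_card hsub2) ?_
      refine le_trans (Finset.card_insert_le _ _) ?_
      simp
    calc k ≤ (S.card : ℝ) := hcard
      _ ≤ 2 := by exact_mod_cast hle2
  · rintro ⟨⟨e⟩, hk2'⟩
    obtain ⟨z, hz⟩ := FracDimAux.inj_of_iso hG hn e
    obtain ⟨w, hw⟩ := FracDimAux.exists_dist_eq hG hz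
      (show Fintype.card V - 1 < Fintype.card V by omega)
    have hwinj : Function.Injective (G.dist w) := FracDimAux.antipode_inj hG hz hw
    have hzw : z ≠ w := by
      intro h
      rw [← h, SimpleGraph.dist_self] at hw
      omega
    set g : V → ℝ := fun v => if v = z ∨ v = w then k / 2 else 0 with hgdef
    have hgval : g z = k / 2 := if_pos (Or.inl rfl)
    have hgvalw : g w = k / 2 := if_pos (Or.inr rfl)
    have hgnonneg : ∀ v, 0 ≤ g v := by
      intro v
      rw [hgdef]
      dsimp only
      split <;> linarith
    have hgres : IsKResolving G k g := by
      constructor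
      · intro v
        refine ⟨hgnonneg v, ?_⟩
        rw [hgdef]
        dsimp only
        split <;> linarith
      · intro x y hxy
        have hzw_mem : ({z, w} : Finset V) ⊆ resSet G x y := by
          intro v hv
          simp only [Finset.mem_insert, Finset.mem_singleton] at hv
          rw [resSet, Finset.mem_filter]
          refine ⟨Finset.mem_univ _, ?_⟩
          rcases hv with rfl | rfl
          · rw [SimpleGraph.dist_comm (u := x), SimpleGraph.dist_comm (u := y)]
            exact fun h => hxy (hz h)
          · rw [SimpleGraph.dist_comm (u := x), SimpleGraph.dist_comm (u := y)]
            exact fun h => hxy (hwinj h)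
        have hsum : ∑ v ∈ ({z, w} : Finset V), g v = k := by
          rw [Finset.sum_pair hzw, hgval, hgvalw]
          ring
        calc k = ∑ v ∈ ({z, w} : Finset V), g v := hsum.symm
          _ ≤ ∑ v ∈ resSet G x y, g v :=
            Finset.sum_le_sum_of_subset_of_nonneg hzw_mem (fun v _ _ => hgnonneg v)
    have htotal : ∑ v, g v = k := by
      rw [← Finset.sum_subset (Finset.subset_univ ({z, w} : Finset V))]
      · rw [Finset.sum_pair hzw, hgval, hgvalw]; ring
      · intro v _ hv
        simp only [Finset.mem_insert, Finset.mem_singleton] at hv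
        push_neg at hv
        rw [hgdef]
        dsimp only
        rw [if_neg (by tauto)]
    have hup : fracKDim G k ≤ k := by
      rw [hdef]
      exact csInf_le hbdd ⟨g, hgres, htotal.symm⟩
    linarith
end

section
/- Let G be a finite simple connected graph of order n ≥ 2, write κ = κ(G), and let R_κ(G) denote the union of the sets R{x,y} over all pairs of distinct vertices x,y with |R{x,y}| = κ. For a real number k with 1 ≤ k ≤ κ, one has dim_f^k(G) = n if and only if k = κ and V(G) = R_κ(G). -/
open Finset

private lemma all_one_of_sum {V : Type*} (s : Finset V) (g : V → ℝ)
    (hle : ∀ z ∈ s, g z ≤ 1) (hsum : (s.card : ℝ) ≤ ∑ z ∈ s, g z) :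
    ∀ z ∈ s, g z = 1 := by
  have h0 : ∑ z ∈ s, (1 - g z) = 0 := by
    have h1 : ∑ z ∈ s, (1 - g z) = (s.card : ℝ) - ∑ z ∈ s, g z := by
      rw [Finset.sum_sub_distrib, Finset.sum_const, nsmul_eq_mul, mul_one]
    have h2 : 0 ≤ ∑ z ∈ s, (1 - g z) :=
      Finset.sum_nonneg fun z hz => by linarith [hle z hz]
    linarith
  intro z hz
  have := (Finset.sum_eq_zero_iff_of_nonneg
    (fun z hz => by linarith [hle z hz] : ∀ z ∈ s, 0 ≤ 1 - g z)).mp h0 z hz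
  linarith

open FracDim in
/-- For a finite simple connected graph `G` of order `n ≥ 2`, writing `κ = κ(G)` and
`R_κ(G)` for the union of the sets `R{x,y}` over distinct pairs with `|R{x,y}| = κ`,
and for a real `k` with `1 ≤ k ≤ κ`: `dim_f^k(G) = n` iff `k = κ` and `V(G) = R_κ(G)`. -/
theorem fracKDim_eq_card_iff {V : Type*} [Fintype V] (G : SimpleGraph V) (hG : G.Connected)
    (hn : 2 ≤ Fintype.card V) (k : ℝ) (hk1 : 1 ≤ k) (hk2 : k ≤ (kappa G : ℝ)) :
    fracKDim G k = (Fintype.card V : ℝ) ↔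
      (k = (kappa G : ℝ) ∧
        (⋃ (x : V) (y : V) (_ : x ≠ y) (_ : (resSet G x y).card = kappa G),
          (↑(resSet G x y) : Set V)) = Set.univ) := by
  classical
  have hκpos : (1 : ℝ) ≤ (kappa G : ℝ) := hk1.trans hk2
  have hκnat : 1 ≤ kappa G := by exact_mod_cast hκpos
  have hκle : ∀ x y : V, x ≠ y → kappa G ≤ (resSet G x y).card := by
    intro x y hxy
    exact Nat.sInf_le ⟨x, y, hxy, rfl⟩
  have hbdd : BddBelow {s : ℝ | ∃ g : V → ℝ, IsKResolving G k g ∧ s = ∑ v, g v} := by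
    refine ⟨0, ?_⟩
    rintro s ⟨g, hg, rfl⟩
    exact Finset.sum_nonneg fun v _ => (hg.1 v).1
  have hle : ∀ g : V → ℝ, IsKResolving G k g → fracKDim G k ≤ ∑ v, g v := by
    intro g hg
    exact csInf_le hbdd ⟨g, hg, rfl⟩
  have hnpos : (0 : ℝ) < (Fintype.card V : ℝ) := by positivity
  constructor
  · intro hdim
    by_contra hcon
    rcases lt_or_eq_of_le hk2 with hkk | hkk
    · -- k < κ : use constant k/κ
      have hκpos' : (0 : ℝ) < (kappa G : ℝ) := by linarith
      set c : ℝ := k / (kappa G : ℝ) with hc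
      have hc0 : 0 ≤ c := by positivity
      have hc1 : c < 1 := by
        rw [hc, div_lt_one hκpos']; exact hkk
      have hres : IsKResolving G k (fun _ => c) := by
        refine ⟨fun v => ⟨hc0, hc1.le⟩, fun x y hxy => ?_⟩
        rw [Finset.sum_const, nsmul_eq_mul]
        have hcard : (kappa G : ℝ) ≤ ((resSet G x y).card : ℝ) := by
          exact_mod_cast hκle x y hxy
        calc k = (kappa G : ℝ) * c := by
                rw [hc, mul_div_cancel₀ _ (ne_of_gt hκpos')]
          _ ≤ ((resSet G x y).card : ℝ) * c := by
                exact mul_le_mul_of_nonneg_right hcard hc0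
      have := hle _ hres
      rw [Finset.sum_const, Finset.card_univ, nsmul_eq_mul] at this
      have : fracKDim G k < (Fintype.card V : ℝ) := by
        calc fracKDim G k ≤ (Fintype.card V : ℝ) * c := this
          _ < (Fintype.card V : ℝ) * 1 := by
                exact mul_lt_mul_of_pos_left hc1 hnpos
          _ = (Fintype.card V : ℝ) := mul_one _
      linarith [hdim ▸ this]
    · -- k = κ, but union ≠ univ
      have hUne : (⋃ (x : V) (y : V) (_ : x ≠ y) (_ : (resSet G x y).card = kappa G),
          (↑(resSet G x y) : Set V)) ≠ Set.univ := fun h => hcon ⟨hkk, h⟩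
      obtain ⟨v, hv⟩ : ∃ v : V, v ∉ (⋃ (x : V) (y : V) (_ : x ≠ y)
          (_ : (resSet G x y).card = kappa G), (↑(resSet G x y) : Set V)) := by
        by_contra h
        push_neg at h
        exact hUne (Set.eq_univ_of_forall h)
      simp only [Set.mem_iUnion, not_exists, Finset.mem_coe] at hv
      set g : V → ℝ := fun z => if z = v then 0 else 1 with hgdef
      have hsum : ∀ s : Finset V, ∑ z ∈ s, g z
          = (s.card : ℝ) - (if v ∈ s then 1 else 0) := by
        intro s
        have : ∀ z, g z = 1 - (if z = v then 1 else 0) := by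
          intro z; by_cases h : z = v <;> simp [hgdef, h]
        simp only [this]
        rw [Finset.sum_sub_distrib, Finset.sum_const, nsmul_eq_mul, mul_one,
          Finset.sum_ite_eq' s v (fun _ => (1 : ℝ))]
      have hres : IsKResolving G k g := by
        constructor
        · intro w; by_cases hw : w = v <;> simp [hgdef, hw]
        · intro x y hxy
          rw [hsum]
          by_cases hvm : v ∈ resSet G x y
          · have hne : (resSet G x y).card ≠ kappa G := fun h => hv x y hxy h hvm
            have h1 : kappa G + 1 ≤ (resSet G x y).card :=
              Nat.succ_le_of_lt (lt_of_le_of_ne (hκle x y hxy) (Ne.symm hne))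
            have h1' : (kappa G : ℝ) + 1 ≤ ((resSet G x y).card : ℝ) := by
              exact_mod_cast h1
            simp only [hvm, if_pos]
            linarith [hkk]
          · have h1 : (kappa G : ℝ) ≤ ((resSet G x y).card : ℝ) := by
              exact_mod_cast hκle x y hxy
            simp only [hvm, if_neg, not_false_iff]
            linarith [hkk]
      have := hle _ hres
      rw [hsum Finset.univ, Finset.card_univ, if_pos (Finset.mem_univ v)] at this
      linarith [hdim ▸ this]
  · rintro ⟨hkκ, hU⟩
    refine le_antisymm ?_ ?_
    · -- g = 1 works
      have hres : IsKResolving G k (fun _ => (1 : ℝ)) := by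
        refine ⟨fun v => ⟨zero_le_one, le_refl 1⟩, fun x y hxy => ?_⟩
        rw [Finset.sum_const, nsmul_eq_mul, mul_one]
        have : (kappa G : ℝ) ≤ ((resSet G x y).card : ℝ) := by
          exact_mod_cast hκle x y hxy
        linarith
      have := hle _ hres
      simpa using this
    · refine le_csInf ⟨(Fintype.card V : ℝ), fun _ => (1 : ℝ), ?_, by simp⟩ ?_
      · refine ⟨fun v => ⟨zero_le_one, le_refl 1⟩, fun x y hxy => ?_⟩
        rw [Finset.sum_const, nsmul_eq_mul, mul_one]
        have : (kappa G : ℝ) ≤ ((resSet G x y).card : ℝ) := by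
          exact_mod_cast hκle x y hxy
        linarith
      · rintro s ⟨g, hg, rfl⟩
        have hall : ∀ v : V, g v = 1 := by
          intro v
          have hvU : v ∈ (⋃ (x : V) (y : V) (_ : x ≠ y)
              (_ : (resSet G x y).card = kappa G), (↑(resSet G x y) : Set V)) := by
            rw [hU]; trivial
          simp only [Set.mem_iUnion, Finset.mem_coe] at hvU
          obtain ⟨x, y, hxy, hcard, hvm⟩ := hvU
          have hk : k ≤ ∑ z ∈ resSet G x y, g z := hg.2 x y hxy
          have hsle : ∑ z ∈ resSet G x y, g z ≤ ((resSet G x y).card : ℝ) := by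
            calc ∑ z ∈ resSet G x y, g z ≤ ∑ z ∈ resSet G x y, (1 : ℝ) :=
                  Finset.sum_le_sum fun z _ => (hg.1 z).2
              _ = ((resSet G x y).card : ℝ) := by
                  rw [Finset.sum_const, nsmul_eq_mul, mul_one]
          have hcr : ((resSet G x y).card : ℝ) ≤ ∑ z ∈ resSet G x y, g z := by
            rw [hcard, ← hkκ]; exact hk
          exact all_one_of_sum _ _ (fun z _ => (hg.1 z).2) hcr v hvm
        have : ∑ v, g v = (Fintype.card V : ℝ) := by simp [hall]
        linarith
end

section
/- Let P_n be the path on n ≥ 2 vertices. Then κ(P_2) = 2 and κ(P_n) = n − 1 for n ≥ 3, and for every real number k with 1 ≤ k ≤ 2 (and k ≤ κ(P_n)), dim_f^k(P_n) = k. -/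
open Finset

section Aux
open SimpleGraph FracDim Finset

-- lower bound on walk length
lemma walk_len {n : ℕ} {x y : Fin n} (p : (pathGraph n).Walk x y) :
    Nat.dist x.val y.val ≤ p.length := by
  induction p with
  | nil => simp [Nat.dist_self]
  | @cons a b c h p ih =>
    have hab : Nat.dist a.val b.val ≤ 1 := by
      rcases pathGraph_adj.mp h with h1 | h1 <;> simp [Nat.dist] <;> omega
    calc Nat.dist a.val c.val ≤ Nat.dist a.val b.val + Nat.dist b.val c.val :=
          Nat.dist.triangle_inequality _ _ _
      _ ≤ 1 + p.length := by omega
      _ = (SimpleGraph.Walk.cons h p).length := by simp [SimpleGraph.Walk.length_cons]; omega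

lemma path_walk {n : ℕ} (d : ℕ) (x y : Fin n) (hxy : x.val ≤ y.val) (hd : y.val - x.val = d) :
    ∃ p : (pathGraph n).Walk x y, p.length = d := by
  induction d generalizing x with
  | zero =>
    have : x = y := Fin.ext (by omega)
    subst this; exact ⟨SimpleGraph.Walk.nil, rfl⟩
  | succ d ih =>
    have hlt : x.val + 1 < n := by have := y.isLt; omega
    set x' : Fin n := ⟨x.val + 1, hlt⟩ with hx'
    have hadj : (pathGraph n).Adj x x' := pathGraph_adj.mpr (Or.inl rfl)
    obtain ⟨p, hp⟩ := ih x' (by simp [hx']; omega) (by simp [hx']; omega)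
    exact ⟨SimpleGraph.Walk.cons hadj p, by simp [hp]⟩

lemma path_dist {n : ℕ} (x y : Fin n) : (pathGraph n).dist x y = Nat.dist x.val y.val := by
  rcases le_total x.val y.val with h | h
  · obtain ⟨p, hp⟩ := path_walk _ x y h rfl
    refine le_antisymm (by simpa [hp, Nat.dist_eq_sub_of_le h] using SimpleGraph.dist_le p) ?_
    obtain ⟨q, hq⟩ := (Reachable.exists_walk_length_eq_dist ⟨p⟩)
    simpa [hq] using walk_len q
  · obtain ⟨p, hp⟩ := path_walk _ y x h rfl
    refine le_antisymm ?_ ?_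
    · rw [SimpleGraph.dist_comm, Nat.dist_comm]
      simpa [hp, Nat.dist_eq_sub_of_le h] using SimpleGraph.dist_le p
    · obtain ⟨q, hq⟩ := (Reachable.exists_walk_length_eq_dist ⟨p.reverse⟩)
      simpa [hq] using walk_len q

open FracDim Finset

lemma natdist_eq_iff {a b c : ℕ} (hab : a ≠ b) : Nat.dist a c = Nat.dist b c ↔ a + b = 2 * c := by
  simp [Nat.dist]; omega

lemma mem_resSet_iff {n : ℕ} (x y z : Fin n) :
    z ∈ resSet (pathGraph n) x y ↔ (pathGraph n).dist x z ≠ (pathGraph n).dist y z := by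
  simp [resSet]

lemma card_resSet {n : ℕ} (x y : Fin n) (hxy : x ≠ y) :
    (resSet (pathGraph n) x y).card =
      n - (Finset.univ.filter (fun z : Fin n => x.val + y.val = 2 * z.val)).card := by
  have hval : x.val ≠ y.val := fun h => hxy (Fin.ext h)
  have hfe : (Finset.univ.filter (fun z : Fin n => ¬ (pathGraph n).dist x z ≠ (pathGraph n).dist y z))
      = Finset.univ.filter (fun z : Fin n => x.val + y.val = 2 * z.val) := by
    apply Finset.filter_congr
    intro z _
    simp only [not_ne_iff, path_dist, natdist_eq_iff hval]
  have := Finset.card_filter_add_card_filter_not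
    (s := (Finset.univ : Finset (Fin n)))
    (p := fun z : Fin n => (pathGraph n).dist x z ≠ (pathGraph n).dist y z)
  rw [hfe] at this
  simp only [Finset.card_univ, Fintype.card_fin] at this
  unfold FracDim.resSet
  omega

lemma card_mid_le_one {n : ℕ} (x y : Fin n) :
    (Finset.univ.filter (fun z : Fin n => x.val + y.val = 2 * z.val)).card ≤ 1 := by
  apply Finset.card_le_one.mpr
  intro a ha b hb
  simp only [Finset.mem_filter] at ha hb
  exact Fin.ext (by omega)

lemma card_resSet_01 {n : ℕ} (hn : 2 ≤ n) :
    (resSet (pathGraph n) ⟨0, by omega⟩ ⟨1, by omega⟩).card = n := by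
  rw [card_resSet _ _ (by simp [Fin.ext_iff])]
  have : (Finset.univ.filter (fun z : Fin n =>
      (⟨0, by omega⟩ : Fin n).val + (⟨1, by omega⟩ : Fin n).val = 2 * z.val)) = ∅ := by
    apply Finset.filter_eq_empty_iff.mpr
    intro z _; simp only [Fin.val_mk]; omega
  rw [this]; simp

lemma card_resSet_02 {n : ℕ} (hn : 3 ≤ n) :
    (resSet (pathGraph n) ⟨0, by omega⟩ ⟨2, by omega⟩).card = n - 1 := by
  rw [card_resSet _ _ (by simp [Fin.ext_iff])]
  have : (Finset.univ.filter (fun z : Fin n =>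
      (⟨0, by omega⟩ : Fin n).val + (⟨2, by omega⟩ : Fin n).val = 2 * z.val)) = {⟨1, by omega⟩} := by
    ext z
    simp only [Finset.mem_filter, Finset.mem_univ, true_and, Finset.mem_singleton, Fin.ext_iff]
    omega
  rw [this]; simp

lemma kappa_path {n : ℕ} (hn : 2 ≤ n) :
    kappa (pathGraph n) = if n = 2 then 2 else n - 1 := by
  have hmem1 : ∀ hn2 : 2 ≤ n, (resSet (pathGraph n) (⟨0, by omega⟩ : Fin n) ⟨1, by omega⟩).card ∈
      {m : ℕ | ∃ x y : Fin n, x ≠ y ∧ (resSet (pathGraph n) x y).card = m} :=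
    fun hn2 => ⟨⟨0, by omega⟩, ⟨1, by omega⟩, by simp [Fin.ext_iff], rfl⟩
  have hlb : ∀ m ∈ {m : ℕ | ∃ x y : Fin n, x ≠ y ∧ (resSet (pathGraph n) x y).card = m},
      n - 1 ≤ m := by
    rintro m ⟨x, y, hxy, rfl⟩
    rw [card_resSet x y hxy]
    have := card_mid_le_one x y
    omega
  unfold FracDim.kappa
  split_ifs with h
  · subst h
    apply le_antisymm
    · have := hmem1 (by omega)
      rw [card_resSet_01 (by omega)] at this
      exact Nat.sInf_le this
    · apply le_csInf ⟨_, hmem1 (by omega)⟩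
      rintro m ⟨x, y, hxy, rfl⟩
      rw [card_resSet x y hxy]
      have hemp : (Finset.univ.filter (fun z : Fin 2 => x.val + y.val = 2 * z.val)) = ∅ := by
        apply Finset.filter_eq_empty_iff.mpr
        intro z _
        have hx := x.isLt; have hy := y.isLt
        have : x.val ≠ y.val := fun h => hxy (Fin.ext h)
        omega
      rw [hemp]; simp
  · have h3 : 3 ≤ n := by omega
    have hmem2 : (n - 1) ∈ {m : ℕ | ∃ x y : Fin n, x ≠ y ∧ (resSet (pathGraph n) x y).card = m} :=
      ⟨⟨0, by omega⟩, ⟨2, by omega⟩, by simp [Fin.ext_iff], card_resSet_02 h3⟩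
    exact le_antisymm (Nat.sInf_le hmem2) (le_csInf ⟨_, hmem2⟩ hlb)

lemma endpoints_mem_s8 {n : ℕ} (hn : 2 ≤ n) (x y : Fin n) (hxy : x ≠ y) :
    (⟨0, by omega⟩ : Fin n) ∈ resSet (pathGraph n) x y ∧
    (⟨n - 1, by omega⟩ : Fin n) ∈ resSet (pathGraph n) x y := by
  have hx := x.isLt
  have hy := y.isLt
  have hv : x.val ≠ y.val := fun h => hxy (Fin.ext h)
  constructor <;> rw [mem_resSet_iff] <;>
    simp only [path_dist, Nat.dist, Fin.val_mk] <;> omega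

lemma frac_main {n : ℕ} (hn : 2 ≤ n) (k : ℝ) (hk1 : 1 ≤ k) (hk2 : k ≤ 2) :
    fracKDim (pathGraph n) k = k := by
  set a : Fin n := ⟨0, by omega⟩ with ha
  set b : Fin n := ⟨n - 1, by omega⟩ with hb
  have hab : a ≠ b := by simp [ha, hb, Fin.ext_iff]; omega
  set g : Fin n → ℝ := fun v => if v = a ∨ v = b then k / 2 else 0 with hgdef
  have hg01 : ∀ v, 0 ≤ g v ∧ g v ≤ 1 := by
    intro v
    by_cases h : v = a ∨ v = b <;> simp only [hgdef, h, if_true, if_false] <;>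
      constructor <;> linarith
  have hpair : ∑ v ∈ ({a, b} : Finset (Fin n)), g v = k := by
    rw [Finset.sum_pair hab]
    simp only [hgdef, if_pos (Or.inl rfl), if_pos (Or.inr rfl)]
    ring
  have hsum : ∑ v, g v = k := by
    rw [← Finset.sum_subset (Finset.subset_univ ({a, b} : Finset (Fin n)))]
    · exact hpair
    · intro v _ hv
      simp only [Finset.mem_insert, Finset.mem_singleton, not_or] at hv
      simp [hgdef, hv.1, hv.2]
  have hres : IsKResolving (pathGraph n) k g := by
    refine ⟨hg01, fun x y hxy => ?_⟩
    have hsub : ({a, b} : Finset (Fin n)) ⊆ resSet (pathGraph n) x y := by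
      intro v hv
      simp only [Finset.mem_insert, Finset.mem_singleton] at hv
      rcases hv with rfl | rfl
      · exact (endpoints_mem_s8 hn x y hxy).1
      · exact (endpoints_mem_s8 hn x y hxy).2
    calc k = ∑ v ∈ ({a, b} : Finset (Fin n)), g v := hpair.symm
      _ ≤ ∑ v ∈ resSet (pathGraph n) x y, g v :=
          Finset.sum_le_sum_of_subset_of_nonneg hsub (fun i _ _ => (hg01 i).1)
  unfold FracDim.fracKDim
  apply IsLeast.csInf_eq
  constructor
  · exact ⟨g, hres, hsum.symm⟩
  · rintro s ⟨g', hg', rfl⟩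
    calc k ≤ ∑ z ∈ resSet (pathGraph n) a b, g' z := hg'.2 a b hab
      _ ≤ ∑ v, g' v :=
          Finset.sum_le_sum_of_subset_of_nonneg (Finset.subset_univ _) (fun i _ _ => (hg'.1 i).1)


end Aux

open FracDim in
/-- For the path `P_n` on `n ≥ 2` vertices: `κ(P₂) = 2`, `κ(P_n) = n - 1` for `n ≥ 3`,
and for every real `k` with `1 ≤ k ≤ 2` (and `k ≤ κ(P_n)`), `dim_f^k(P_n) = k`. -/
theorem fracKDim_path_small_k (n : ℕ) (hn : 2 ≤ n) :
    kappa (SimpleGraph.pathGraph 2) = 2 ∧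
      (3 ≤ n → kappa (SimpleGraph.pathGraph n) = n - 1) ∧
      (∀ k : ℝ, 1 ≤ k → k ≤ 2 → k ≤ (kappa (SimpleGraph.pathGraph n) : ℝ) →
        fracKDim (SimpleGraph.pathGraph n) k = k) := by
  refine ⟨by simpa using kappa_path (le_refl 2), fun h3 => ?_,
    fun k hk1 hk2 _ => frac_main hn k hk1 hk2⟩
  rw [kappa_path hn]
  simp only [if_neg (by omega : ¬ n = 2)]
end

section
/- Let C_n be the cycle on n ≥ 3 vertices, so that κ(C_n) = n − 2 if n is even and κ(C_n) = n − 1 if n is odd. For every real number k with 1 ≤ k ≤ κ(C_n), dim_f^k(C_n) = k·dim_f(C_n); explicitly, dim_f^k(C_n) = k·n/(n − 2) if n is even and dim_f^k(C_n) = k·n/(n − 1) if n is odd. -/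
open Finset

section Helpers

open Fin.CommRing

section
variable {n : ℕ} [NeZero n]

lemma val_add_cases (a b : Fin n) : (a+b).val = a.val + b.val ∨ (a+b).val + n = a.val + b.val := by
  have h := Fin.val_add a b
  have ha := a.isLt; have hb := b.isLt; have hc := (a+b).isLt
  rcases Nat.lt_or_ge (a.val + b.val) n with h' | h'
  · left; rw [h, Nat.mod_eq_of_lt h']
  · right; rw [h, Nat.mod_eq_sub_mod h', Nat.mod_eq_of_lt (by omega)]; omega

lemma val_neg_cases (a : Fin n) : a.val + (-a).val = 0 ∨ a.val + (-a).val = n := by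
  have h := val_add_cases a (-a)
  rw [add_neg_cancel] at h
  simp at h; omega
end

section
variable {n : ℕ} [NeZero n]

/-- potential -/
def Efun (a : Fin n) : ℕ := min a.val (-a).val

lemma Efun_neg (a : Fin n) : Efun (-a) = Efun a := by
  simp [Efun, Nat.min_comm]

lemma Efun_step (hn : 2 ≤ n) (a : Fin n) : Efun (a + 1) ≤ Efun a + 1 := by
  have h1 : (1 : Fin n).val = 1 := by rw [Fin.val_one']; exact Nat.mod_eq_of_lt hn
  have h2 := val_add_cases a 1
  rw [h1] at h2
  have h3 := val_neg_cases a
  have h4 := val_neg_cases (a + 1)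
  have ha := a.isLt
  have hb := (a+1).isLt
  have hc := (-a).isLt
  have hd := (-(a+1)).isLt
  unfold Efun
  omega

lemma Efun_step' (hn : 2 ≤ n) (a : Fin n) : Efun (a - 1) ≤ Efun a + 1 := by
  have : a - 1 = -((-a) + 1) := by ring
  rw [this, Efun_neg]
  calc Efun ((-a) + 1) ≤ Efun (-a) + 1 := Efun_step hn _
    _ = Efun a + 1 := by rw [Efun_neg]
end


section
variable {n : ℕ} [NeZero n]

lemma cycle_adj (hn : 2 ≤ n) {u v : Fin n} (h : (SimpleGraph.cycleGraph n).Adj u v) :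
    v = u + 1 ∨ v = u - 1 := by
  have h1 : (1 : Fin n).val = 1 := by rw [Fin.val_one']; exact Nat.mod_eq_of_lt hn
  rw [SimpleGraph.cycleGraph_adj'] at h
  rcases h with h | h
  · right
    have : u - v = 1 := Fin.ext (by rw [h1]; exact h)
    rw [← this]; ring
  · left
    have : v - u = 1 := Fin.ext (by rw [h1]; exact h)
    rw [← this]; ring

lemma cycle_adj_of (hn : 2 ≤ n) (u : Fin n) : (SimpleGraph.cycleGraph n).Adj u (u + 1) := by
  have h1 : (1 : Fin n).val = 1 := by rw [Fin.val_one']; exact Nat.mod_eq_of_lt hn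
  rw [SimpleGraph.cycleGraph_adj']
  right
  rw [add_sub_cancel_left, h1]

lemma cycle_connected : (SimpleGraph.cycleGraph n).Connected := by
  obtain ⟨m, rfl⟩ : ∃ m, n = m + 1 := ⟨n - 1, by have := Nat.pos_of_ne_zero (NeZero.ne n); omega⟩
  exact SimpleGraph.cycleGraph_connected

lemma cycle_dist_le (hn : 2 ≤ n) (u : Fin n) (k : ℕ) :
    (SimpleGraph.cycleGraph n).dist u (u + (k : Fin n)) ≤ k := by
  induction k with
  | zero => simp
  | succ k ih =>
    have h1 := (cycle_connected (n := n)).dist_triangle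
      (u := u) (v := u + (k : Fin n)) (w := u + ((k+1 : ℕ) : Fin n))
    have h2 : ((k+1 : ℕ) : Fin n) = (k : Fin n) + 1 := by push_cast; ring
    have h3 : (SimpleGraph.cycleGraph n).dist (u + (k : Fin n)) (u + ((k+1:ℕ) : Fin n)) = 1 := by
      rw [SimpleGraph.dist_eq_one_iff_adj, h2, ← add_assoc]
      exact cycle_adj_of hn _
    omega

lemma cycle_dist_walk_ge (hn : 2 ≤ n) :
    ∀ (u v : Fin n) (p : (SimpleGraph.cycleGraph n).Walk u v), Efun (v - u) ≤ p.length := by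
  intro u v p
  induction p with
  | nil => simp [Efun]
  | @cons a b c h p ih =>
    rw [SimpleGraph.Walk.length_cons]
    rcases cycle_adj hn h with rfl | rfl
    · have : c - a = (c - (a + 1)) + 1 := by ring
      rw [this]
      calc Efun (c - (a+1) + 1) ≤ Efun (c - (a+1)) + 1 := Efun_step hn _
        _ ≤ p.length + 1 := by omega
    · have : c - a = (c - (a - 1)) - 1 := by ring
      rw [this]
      calc Efun (c - (a-1) - 1) ≤ Efun (c - (a-1)) + 1 := Efun_step' hn _
        _ ≤ p.length + 1 := by omega

lemma cycle_dist (hn : 2 ≤ n) (u v : Fin n) :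
    (SimpleGraph.cycleGraph n).dist u v = min (v - u).val (u - v).val := by
  apply le_antisymm
  · apply le_min
    · have := cycle_dist_le hn u (v - u).val
      rwa [Fin.cast_val_eq_self, add_sub_cancel] at this
    · have := cycle_dist_le hn v (u - v).val
      rw [Fin.cast_val_eq_self, add_sub_cancel] at this
      rwa [SimpleGraph.dist_comm] at this
  · obtain ⟨p, hp⟩ := ((cycle_connected (n:=n)) u v).exists_walk_length_eq_dist
    have h := cycle_dist_walk_ge hn u v p
    rw [hp] at h
    have : Efun (v - u) = min (v - u).val (u - v).val := by
      rw [Efun]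
      congr 1
      rw [show u - v = -(v - u) by ring]
    omega
end

section
variable {n : ℕ} [NeZero n]

lemma dist_eq_iff (hn : 2 ≤ n) {x y : Fin n} (hxy : x ≠ y) (z : Fin n) :
    (SimpleGraph.cycleGraph n).dist x z = (SimpleGraph.cycleGraph n).dist y z ↔
      z + z = x + y := by
  rw [SimpleGraph.dist_comm (v := z), SimpleGraph.dist_comm (u := y), cycle_dist hn,
    cycle_dist hn]
  have e1 : x - z = -(z - x) := by ring
  have e2 : y - z = -(z - y) := by ring
  rw [e1, e2]
  have h1 := val_neg_cases (z - x)
  have h2 := val_neg_cases (z - y)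
  have l1 := (z-x).isLt; have l2 := (z-y).isLt
  have l3 := (-(z-x)).isLt; have l4 := (-(z-y)).isLt
  have hpq : (z - x).val ≠ (z - y).val := fun h =>
    hxy (sub_right_injective (Fin.ext h : z - x = z - y))
  constructor
  · intro h
    have hv := val_add_cases (z-x) (z-y)
    have l5 := ((z-x)+(z-y)).isLt
    have h0 : (z - x) + (z - y) = 0 := by
      apply Fin.ext
      simp only [Fin.val_zero]
      omega
    have : z + z - (x + y) = 0 := by
      rw [show z + z - (x + y) = (z-x)+(z-y) from by ring, h0]
    exact sub_eq_zero.mp this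
  · intro h
    have h0 : (z - x) + (z - y) = 0 := by
      rw [show (z-x)+(z-y) = z + z - (x + y) from by ring, h, sub_self]
    have hv := val_add_cases (z-x) (z-y)
    have h00 : ((z-x)+(z-y)).val = 0 := by rw [h0]; rfl
    omega

lemma two_torsion (w : Fin n) : w + w = 0 ↔ (w.val = 0 ∨ 2 * w.val = n) := by
  have hv := val_add_cases w w
  have l1 := w.isLt
  have l5 := (w+w).isLt
  rw [Fin.ext_iff, Fin.val_zero]
  set s := (w + w).val with hs
  clear_value s
  omega

lemma count_sq_odd (hodd : n % 2 = 1) (b : Fin n) :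
    (univ.filter (fun z : Fin n => z + z = b)).card = 1 := by
  have hinj : Function.Injective (fun z : Fin n => z + z) := by
    intro z w h
    replace h : z + z = w + w := h
    have h0 : (z - w) + (z - w) = 0 := by
      rw [show (z-w)+(z-w) = (z+z) - (w+w) from by ring, h, sub_self]
    rw [two_torsion] at h0
    have l1 := (z-w).isLt
    have : (z - w).val = 0 := by omega
    have : z - w = 0 := Fin.ext this
    exact sub_eq_zero.mp this
  obtain ⟨z₀, hz₀⟩ := (Finite.injective_iff_surjective.mp hinj) b
  rw [Finset.card_eq_one]
  exact ⟨z₀, by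
    ext z
    simp only [Finset.mem_filter, Finset.mem_univ, true_and, Finset.mem_singleton]
    constructor
    · intro h; exact hinj (h.trans hz₀.symm)
    · rintro rfl; exact hz₀⟩

lemma sq_iff_even (heven : n % 2 = 0) (hn : 3 ≤ n) (a z : Fin n) :
    z + z = a + a ↔ (z = a ∨ z = a + ⟨n/2, by omega⟩) := by
  have h0 : z + z = a + a ↔ (z - a) + (z - a) = 0 := by
    constructor
    · intro h; rw [show (z-a)+(z-a) = (z+z) - (a+a) from by ring, h, sub_self]
    · intro h
      have : z + z - (a + a) = 0 := by
        rw [show z + z - (a+a) = (z-a)+(z-a) from by ring, h]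
      exact sub_eq_zero.mp this
  rw [h0, two_torsion]
  have l1 := (z - a).isLt
  constructor
  · rintro (h | h)
    · left; exact sub_eq_zero.mp (Fin.ext h)
    · right
      have : z - a = ⟨n/2, by omega⟩ := Fin.ext (by simp only []; omega)
      rw [← this]; ring
  · rintro (rfl | rfl)
    · left; simp
    · right
      have : a + ⟨n/2, by omega⟩ - a = ⟨n/2, by omega⟩ := by ring
      rw [this]
      show 2 * (n/2 : ℕ) = n
      omega

lemma half_ne_zero (heven : n % 2 = 0) (hn : 3 ≤ n) :
    (⟨n/2, by omega⟩ : Fin n) ≠ 0 := by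
  intro h
  rw [Fin.ext_iff] at h
  simp only [Fin.val_zero] at h
  omega

lemma count_sq_even (heven : n % 2 = 0) (hn : 3 ≤ n) (a : Fin n) :
    (univ.filter (fun z : Fin n => z + z = a + a)).card = 2 := by
  have : (univ.filter (fun z : Fin n => z + z = a + a)) = {a, a + ⟨n/2, by omega⟩} := by
    ext z
    simp only [Finset.mem_filter, Finset.mem_univ, true_and, Finset.mem_insert,
      Finset.mem_singleton]
    exact sq_iff_even heven hn a z
  rw [this, Finset.card_pair]
  intro h
  exact half_ne_zero heven hn (by
    have := sub_eq_zero.mpr h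
    rw [show a - (a + ⟨n/2, by omega⟩) = -⟨n/2, by omega⟩ from by ring] at this
    rw [← neg_eq_zero]; exact this)

lemma count_sq_even_le (heven : n % 2 = 0) (hn : 3 ≤ n) (b : Fin n) :
    (univ.filter (fun z : Fin n => z + z = b)).card ≤ 2 := by
  rcases Finset.eq_empty_or_nonempty (univ.filter (fun z : Fin n => z + z = b)) with h | ⟨z₀, hz₀⟩
  · rw [h]; simp
  · simp only [Finset.mem_filter, Finset.mem_univ, true_and] at hz₀
    calc (univ.filter (fun z : Fin n => z + z = b)).card
        ≤ ({z₀, z₀ + ⟨n/2, by omega⟩} : Finset (Fin n)).card := by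
          apply Finset.card_le_card
          intro z hz
          simp only [Finset.mem_filter, Finset.mem_univ, true_and] at hz
          simp only [Finset.mem_insert, Finset.mem_singleton]
          exact (sq_iff_even heven hn z₀ z).mp (hz.trans hz₀.symm)
      _ ≤ 2 := Finset.card_insert_le _ _ |>.trans (by simp)
end

section
variable {n : ℕ} [NeZero n]

lemma resSet_card (hn : 3 ≤ n) {x y : Fin n} (hxy : x ≠ y) :
    (FracDim.resSet (SimpleGraph.cycleGraph n) x y).card
      = n - (univ.filter (fun z : Fin n => z + z = x + y)).card := by
  have h1 : FracDim.resSet (SimpleGraph.cycleGraph n) x y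
      = univ.filter (fun z : Fin n => ¬ (z + z = x + y)) := by
    ext z
    simp only [FracDim.resSet, Finset.mem_filter, Finset.mem_univ, true_and]
    exact not_congr (dist_eq_iff (by omega) hxy z)
  have h2 := Finset.card_filter_add_card_filter_not
    (s := (univ : Finset (Fin n))) (p := fun z : Fin n => z + z = x + y)
  rw [h1]
  rw [Finset.card_univ, Fintype.card_fin] at h2
  omega

lemma resSet_card_odd (hodd : n % 2 = 1) (hn : 3 ≤ n) {x y : Fin n} (hxy : x ≠ y) :
    (FracDim.resSet (SimpleGraph.cycleGraph n) x y).card = n - 1 := by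
  rw [resSet_card hn hxy, count_sq_odd hodd]

lemma kappa_odd (hodd : n % 2 = 1) (hn : 3 ≤ n) :
    FracDim.kappa (SimpleGraph.cycleGraph n) = n - 1 := by
  have h1 : (1 : Fin n).val = 1 := by rw [Fin.val_one']; exact Nat.mod_eq_of_lt (by omega)
  have hne : (0 : Fin n) ≠ (1 : Fin n) := by
    simp only [ne_eq, Fin.ext_iff, Fin.val_zero, h1]
    omega
  apply le_antisymm
  · exact Nat.sInf_le ⟨0, 1, hne, resSet_card_odd hodd hn hne⟩
  · apply le_csInf
    · exact ⟨_, 0, 1, hne, rfl⟩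
    rintro m ⟨x, y, hxy, rfl⟩
    rw [resSet_card_odd hodd hn hxy]

lemma resSet_card_even_ge (heven : n % 2 = 0) (hn : 3 ≤ n) {x y : Fin n} (hxy : x ≠ y) :
    n - 2 ≤ (FracDim.resSet (SimpleGraph.cycleGraph n) x y).card := by
  rw [resSet_card hn hxy]
  have := count_sq_even_le heven hn (x + y)
  omega

lemma kappa_even (heven : n % 2 = 0) (hn : 3 ≤ n) :
    FracDim.kappa (SimpleGraph.cycleGraph n) = n - 2 := by
  have h1 : (1 : Fin n).val = 1 := by rw [Fin.val_one']; exact Nat.mod_eq_of_lt (by omega)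
  have h2 : ((1 : Fin n) + 1).val = 2 := by
    have hv := val_add_cases (1 : Fin n) 1
    rw [h1] at hv
    have hlt := ((1:Fin n)+1).isLt
    set s := ((1 : Fin n) + 1).val with hs
    clear_value s
    omega
  have hne : (0 : Fin n) ≠ (1 : Fin n) + 1 := by
    simp only [ne_eq, Fin.ext_iff, Fin.val_zero, h2]
    omega
  apply le_antisymm
  · apply Nat.sInf_le
    refine ⟨0, (1 : Fin n) + 1, hne, ?_⟩
    rw [resSet_card hn hne, show (0 : Fin n) + ((1:Fin n)+1) = 1 + 1 from by ring,
      count_sq_even heven hn 1]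
  · apply le_csInf
    · exact ⟨_, 0, 1 + 1, hne, rfl⟩
    rintro m ⟨x, y, hxy, rfl⟩
    exact resSet_card_even_ge heven hn hxy
end

section
variable {n : ℕ} [NeZero n]

lemma mem_resSet_iff_s14 (hn : 3 ≤ n) {x y : Fin n} (hxy : x ≠ y) (z : Fin n) :
    z ∈ FracDim.resSet (SimpleGraph.cycleGraph n) x y ↔ ¬ (z + z = x + y) := by
  simp only [FracDim.resSet, Finset.mem_filter, Finset.mem_univ, true_and, ne_eq]
  exact not_congr (dist_eq_iff (by omega) hxy z)

lemma count_pairs_odd (hodd : n % 2 = 1) (hn : 3 ≤ n) (z : Fin n) :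
    (univ.filter (fun i : Fin n =>
      z ∈ FracDim.resSet (SimpleGraph.cycleGraph n) i (i + 1))).card = n - 1 := by
  have h1 : (1 : Fin n).val = 1 := by rw [Fin.val_one']; exact Nat.mod_eq_of_lt (by omega)
  have hone : (1 : Fin n) ≠ 0 := by simp only [ne_eq, Fin.ext_iff, Fin.val_zero, h1]; omega
  have hxy : ∀ i : Fin n, i ≠ i + 1 := fun i h => hone (left_eq_add.mp h)
  have key : ∀ i : Fin n,
      (z ∈ FracDim.resSet (SimpleGraph.cycleGraph n) i (i + 1)) ↔ ¬ (i + i = z + z - 1) := by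
    intro i
    rw [mem_resSet_iff_s14 hn (hxy i) z]
    apply not_congr
    rw [eq_comm, show i + (i + 1) = (i + i) + 1 from by ring, ← eq_sub_iff_add_eq]
  have heq : (univ.filter (fun i : Fin n =>
      z ∈ FracDim.resSet (SimpleGraph.cycleGraph n) i (i + 1)))
      = univ.filter (fun i : Fin n => ¬ (i + i = z + z - 1)) := by
    ext i
    simp only [Finset.mem_filter, Finset.mem_univ, true_and]
    exact key i
  have htot := Finset.card_filter_add_card_filter_not
    (s := (univ : Finset (Fin n))) (p := fun i : Fin n => i + i = z + z - 1)
  have hcnt := count_sq_odd hodd (z + z - 1)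
  rw [Finset.card_univ, Fintype.card_fin] at htot
  rw [heq]
  omega

lemma count_pairs_even (heven : n % 2 = 0) (hn : 3 ≤ n) (z : Fin n) :
    (univ.filter (fun i : Fin n =>
      z ∈ FracDim.resSet (SimpleGraph.cycleGraph n) i (i + (1 + 1)))).card = n - 2 := by
  have h1 : (1 : Fin n).val = 1 := by rw [Fin.val_one']; exact Nat.mod_eq_of_lt (by omega)
  have h2 : ((1 : Fin n) + 1).val = 2 := by
    have hv := val_add_cases (1 : Fin n) 1
    rw [h1] at hv
    have hlt := ((1:Fin n)+1).isLt
    set s := ((1 : Fin n) + 1).val with hs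
    clear_value s
    omega
  have htwo : (1 : Fin n) + 1 ≠ 0 := by
    simp only [ne_eq, Fin.ext_iff, Fin.val_zero, h2]; omega
  have hxy : ∀ i : Fin n, i ≠ i + (1 + 1) := fun i h => htwo (left_eq_add.mp h)
  have key : ∀ i : Fin n,
      (z ∈ FracDim.resSet (SimpleGraph.cycleGraph n) i (i + (1 + 1)))
        ↔ ¬ ((i + 1) + (i + 1) = z + z) := by
    intro i
    rw [mem_resSet_iff_s14 hn (hxy i) z]
    apply not_congr
    rw [eq_comm, show i + (i + (1 + 1)) = (i + 1) + (i + 1) from by ring]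
  have heq : (univ.filter (fun i : Fin n =>
      z ∈ FracDim.resSet (SimpleGraph.cycleGraph n) i (i + (1 + 1))))
      = univ.filter (fun i : Fin n => ¬ ((i + 1) + (i + 1) = z + z)) := by
    ext i
    simp only [Finset.mem_filter, Finset.mem_univ, true_and]
    exact key i
  have hcnt : (univ.filter (fun i : Fin n => (i + 1) + (i + 1) = z + z)).card = 2 := by
    have hpair : (univ.filter (fun i : Fin n => (i + 1) + (i + 1) = z + z))
        = {z - 1, z + ⟨n/2, by omega⟩ - 1} := by
      ext i
      simp only [Finset.mem_filter, Finset.mem_univ, true_and, Finset.mem_insert,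
        Finset.mem_singleton]
      rw [sq_iff_even heven hn z (i + 1)]
      constructor
      · rintro (h | h)
        · left; rw [← h]; ring
        · right; rw [← h]; ring
      · rintro (rfl | rfl)
        · left; ring
        · right; ring
    rw [hpair, Finset.card_pair]
    intro h
    apply half_ne_zero heven hn
    have : z + ⟨n/2, by omega⟩ - 1 - (z - 1) = ⟨n/2, by omega⟩ := by ring
    rw [← this, ← h]
    ring
  have htot := Finset.card_filter_add_card_filter_not
    (s := (univ : Finset (Fin n))) (p := fun i : Fin n => (i + 1) + (i + 1) = z + z)
  rw [Finset.card_univ, Fintype.card_fin] at htot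
  rw [heq]
  omega
end

section
open FracDim

lemma main_calc {V : Type*} [Fintype V] [DecidableEq V] (G : SimpleGraph V) (k : ℝ)
    (x y : V → V) (hxy : ∀ i, x i ≠ y i)
    (hcount : ∀ z : V, (univ.filter (fun i => z ∈ resSet G (x i) (y i))).card = kappa G)
    (hk1 : 1 ≤ k) (hkk : k ≤ (kappa G : ℝ)) :
    fracKDim G k = k * (Fintype.card V) / (kappa G) := by
  classical
  have hκ1 : (1 : ℝ) ≤ (kappa G : ℝ) := le_trans hk1 hkk
  have hκ0 : (0 : ℝ) < (kappa G : ℝ) := by linarith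
  have hk0 : (0 : ℝ) < k := by linarith
  set S : Set ℝ := {s : ℝ | ∃ g : V → ℝ, IsKResolving G k g ∧ s = ∑ v, g v} with hS
  have hlb : ∀ s ∈ S, k * (Fintype.card V) / (kappa G) ≤ s := by
    rintro s ⟨g, ⟨hg01, hres⟩, rfl⟩
    have key : (kappa G : ℝ) * (∑ v, g v)
        = ∑ i, ∑ z ∈ resSet G (x i) (y i), g z := by
      calc (kappa G : ℝ) * (∑ v, g v) = ∑ z, (kappa G : ℝ) * g z := Finset.mul_sum _ _ _
        _ = ∑ z, ((univ.filter (fun i => z ∈ resSet G (x i) (y i))).card : ℝ) * g z := by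
            refine Finset.sum_congr rfl fun z _ => ?_
            rw [hcount z]
        _ = ∑ z, ∑ i, (if z ∈ resSet G (x i) (y i) then g z else 0) := by
            refine Finset.sum_congr rfl fun z _ => ?_
            rw [Finset.sum_ite, Finset.sum_const, Finset.sum_const_zero, add_zero,
              nsmul_eq_mul]
        _ = ∑ i, ∑ z, (if z ∈ resSet G (x i) (y i) then g z else 0) := Finset.sum_comm
        _ = ∑ i, ∑ z ∈ resSet G (x i) (y i), g z := by
            refine Finset.sum_congr rfl fun i _ => ?_
            rw [Finset.sum_ite_mem, Finset.univ_inter]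
    have hge : (Fintype.card V : ℝ) * k ≤ ∑ i, ∑ z ∈ resSet G (x i) (y i), g z := by
      calc (Fintype.card V : ℝ) * k = ∑ _i : V, k := by
            rw [Finset.sum_const, nsmul_eq_mul, Finset.card_univ]
        _ ≤ _ := Finset.sum_le_sum fun i _ => hres (x i) (y i) (hxy i)
    rw [div_le_iff₀ hκ0]
    nlinarith [key, hge]
  have hmem : k * (Fintype.card V) / (kappa G) ∈ S := by
    refine ⟨fun _ => k / (kappa G : ℝ), ⟨fun v => ⟨div_nonneg hk0.le hκ0.le,
      (div_le_one hκ0).mpr hkk⟩, ?_⟩, ?_⟩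
    · intro a b hab
      have hcard : (kappa G : ℝ) ≤ ((resSet G a b).card : ℝ) := by
        have hmem' : (resSet G a b).card
            ∈ {m : ℕ | ∃ x y : V, x ≠ y ∧ (resSet G x y).card = m} := ⟨a, b, hab, rfl⟩
        have h := Nat.sInf_le hmem'
        exact_mod_cast h
      calc k = (kappa G : ℝ) * (k / (kappa G : ℝ)) := by field_simp
        _ ≤ ((resSet G a b).card : ℝ) * (k / (kappa G : ℝ)) := by
            apply mul_le_mul_of_nonneg_right hcard (div_nonneg hk0.le hκ0.le)
        _ = ∑ _z ∈ resSet G a b, k / (kappa G : ℝ) := by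
            rw [Finset.sum_const, nsmul_eq_mul]
    · rw [Finset.sum_const, nsmul_eq_mul, Finset.card_univ]
      field_simp
  have hbdd : BddBelow S := ⟨k * (Fintype.card V) / (kappa G), fun s hs => hlb s hs⟩
  exact le_antisymm (csInf_le hbdd hmem) (le_csInf ⟨_, hmem⟩ hlb)
end

end Helpers


open FracDim in
/-- For the cycle `C_n` on `n ≥ 3` vertices: `κ(C_n) = n − 2` if `n` is even and
`κ(C_n) = n − 1` if `n` is odd; and for every real `k` with `1 ≤ k ≤ κ(C_n)`,
`dim_f^k(C_n) = k · dim_f(C_n)`, explicitly `k·n/(n − 2)` if `n` is even and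
`k·n/(n − 1)` if `n` is odd. -/
theorem fracKDim_cycle (n : ℕ) (hn : 3 ≤ n) :
    (Even n → kappa (SimpleGraph.cycleGraph n) = n - 2) ∧
      (Odd n → kappa (SimpleGraph.cycleGraph n) = n - 1) ∧
      ∀ k : ℝ, 1 ≤ k → k ≤ (kappa (SimpleGraph.cycleGraph n) : ℝ) →
        fracKDim (SimpleGraph.cycleGraph n) k = k * fracDim (SimpleGraph.cycleGraph n) ∧
          (Even n → fracKDim (SimpleGraph.cycleGraph n) k = k * (n : ℝ) / ((n : ℝ) - 2)) ∧
          (Odd n → fracKDim (SimpleGraph.cycleGraph n) k = k * (n : ℝ) / ((n : ℝ) - 1)) := by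
  haveI : NeZero n := ⟨by omega⟩
  refine ⟨fun he => kappa_even (Nat.even_iff.mp he) hn,
    fun ho => kappa_odd (Nat.odd_iff.mp ho) hn, ?_⟩
  intro k hk1 hkk
  rcases Nat.even_or_odd n with he | ho
  · have h0 : n % 2 = 0 := Nat.even_iff.mp he
    have hκ : kappa (SimpleGraph.cycleGraph n) = n - 2 := kappa_even h0 hn
    have hxy : ∀ i : Fin n, i ≠ i + (1 + 1) := by
      intro i h
      have h1 : (1 : Fin n).val = 1 := by rw [Fin.val_one']; exact Nat.mod_eq_of_lt (by omega)
      have h2 : ((1 : Fin n) + 1).val = 2 := by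
        have hv := val_add_cases (1 : Fin n) 1
        rw [h1] at hv
        have hlt := ((1:Fin n)+1).isLt
        set s := ((1 : Fin n) + 1).val with hs
        clear_value s
        omega
      have := left_eq_add.mp h
      rw [Fin.ext_iff, h2, Fin.val_zero] at this
      omega
    have hcount : ∀ z : Fin n, (univ.filter (fun i : Fin n =>
        z ∈ resSet (SimpleGraph.cycleGraph n) i (i + (1 + 1)))).card
          = kappa (SimpleGraph.cycleGraph n) := by
      intro z
      rw [hκ]
      exact count_pairs_even h0 hn z
    have hcast : ((n - 2 : ℕ) : ℝ) = (n : ℝ) - 2 := by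
      rw [Nat.cast_sub (by omega)]
      norm_num
    have hmain := main_calc (SimpleGraph.cycleGraph n) k _ _ hxy hcount hk1 hkk
    have hmain1 := main_calc (SimpleGraph.cycleGraph n) 1 _ _ hxy hcount le_rfl
      (le_trans hk1 hkk)
    rw [Fintype.card_fin, hκ, hcast] at hmain hmain1
    have hfd : fracDim (SimpleGraph.cycleGraph n) = 1 * (n : ℝ) / ((n : ℝ) - 2) := hmain1
    refine ⟨?_, fun _ => hmain, fun ho => absurd (Nat.odd_iff.mp ho) (by omega)⟩
    rw [hmain, fracDim, hmain1]
    ring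
  · have h0 : n % 2 = 1 := Nat.odd_iff.mp ho
    have hκ : kappa (SimpleGraph.cycleGraph n) = n - 1 := kappa_odd h0 hn
    have hxy : ∀ i : Fin n, i ≠ i + 1 := by
      intro i h
      have h1 : (1 : Fin n).val = 1 := by rw [Fin.val_one']; exact Nat.mod_eq_of_lt (by omega)
      have := left_eq_add.mp h
      rw [Fin.ext_iff, h1, Fin.val_zero] at this
      omega
    have hcount : ∀ z : Fin n, (univ.filter (fun i : Fin n =>
        z ∈ resSet (SimpleGraph.cycleGraph n) i (i + 1))).card
          = kappa (SimpleGraph.cycleGraph n) := by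
      intro z
      rw [hκ]
      exact count_pairs_odd h0 hn z
    have hcast : ((n - 1 : ℕ) : ℝ) = (n : ℝ) - 1 := by
      rw [Nat.cast_sub (by omega)]
      norm_num
    have hmain := main_calc (SimpleGraph.cycleGraph n) k _ _ hxy hcount hk1 hkk
    have hmain1 := main_calc (SimpleGraph.cycleGraph n) 1 _ _ hxy hcount le_rfl
      (le_trans hk1 hkk)
    rw [Fintype.card_fin, hκ, hcast] at hmain hmain1
    refine ⟨?_, fun he => absurd (Nat.even_iff.mp he) (by omega), fun _ => hmain⟩
    rw [hmain, fracDim, hmain1]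
    ring
end

section
/- For n ≥ 5, let W_n be the wheel graph obtained from the cycle C_{n−1} by adding one new vertex adjacent to every cycle vertex. Then κ(W_5) = 2 and κ(W_n) = 4 for n ≥ 6, and: dim_f^k(W_5) = 2k for every real k ∈ [1,2]; dim_f^k(W_6) = 3k/2 for every real k ∈ [1,4]; and for n ≥ 7, dim_f^k(W_n) = k(n−1)/4 for every real k ∈ [1,4]. -/
open Finset

namespace FracDim

/-- The wheel graph with rim `C_m` (`m` rim vertices) plus a hub (`none`) adjacent to all
rim vertices; `W_n = wheelGraph (n - 1)` has order `n`. -/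
def wheelGraph (m : ℕ) : SimpleGraph (Option (Fin m)) :=
  SimpleGraph.fromRel (fun a b =>
    (a = none ∧ b ≠ none) ∨
      (∃ i j : Fin m, a = some i ∧ b = some j ∧ (SimpleGraph.cycleGraph m).Adj i j))

end FracDim

namespace FracDim
open SimpleGraph
variable {V : Type*}

instance wheelDec (m : ℕ) : DecidableRel (wheelGraph m).Adj := fun a b =>
  decidable_of_iff' _ (SimpleGraph.fromRel_adj _ a b)

lemma adj_none_some (m : ℕ) (i : Fin m) : (wheelGraph m).Adj none (some i) := by
  rw [wheelGraph, fromRel_adj]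
  exact ⟨by simp, Or.inl (Or.inl ⟨rfl, by simp⟩)⟩

lemma adj_some_some (m : ℕ) (i j : Fin m) :
    (wheelGraph m).Adj (some i) (some j) ↔ (cycleGraph m).Adj i j := by
  rw [wheelGraph, fromRel_adj]
  constructor
  · rintro ⟨hne, h | h⟩
    · rcases h with ⟨h,_⟩ | ⟨a,b,ha,hb,hab⟩
      · exact absurd h (by simp)
      · cases ha; cases hb; exact hab
    · rcases h with ⟨h,_⟩ | ⟨a,b,ha,hb,hab⟩
      · exact absurd h (by simp)
      · cases ha; cases hb; exact hab.symm
  · intro h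
    exact ⟨by simpa using h.ne, Or.inl (Or.inr ⟨i, j, rfl, rfl, h⟩)⟩

lemma wheel_dist (m : ℕ) (x y : Option (Fin m)) :
    (wheelGraph m).dist x y = if x = y then 0 else if (wheelGraph m).Adj x y then 1 else 2 := by
  split_ifs with h1 h2
  · subst h1; exact SimpleGraph.dist_self
  · exact (dist_eq_one_iff_adj).2 h2
  · match x, y with
    | none, none => exact absurd rfl h1
    | none, some j => exact absurd (adj_none_some m j) h2
    | some i, none => exact absurd ((adj_none_some m i).symm) h2
    | some i, some j =>
        have hle : (wheelGraph m).dist (some i) (some j) ≤ 2 := by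
          simpa using dist_le (((adj_none_some m i).symm.toWalk).append (adj_none_some m j).toWalk)
        have h0 : (wheelGraph m).dist (some i) (some j) ≠ 0 := by
          rw [dist_ne_zero_iff_ne_and_reachable]
          exact ⟨h1, ⟨((adj_none_some m i).symm.toWalk).append (adj_none_some m j).toWalk⟩⟩
        have hone : (wheelGraph m).dist (some i) (some j) ≠ 1 := by
          rw [ne_eq, dist_eq_one_iff_adj]; exact h2
        omega

lemma mem_resSet {m : ℕ} {x y z : Option (Fin m)} (hxy : x ≠ y) :
    z ∈ resSet (wheelGraph m) x y ↔
      z = x ∨ z = y ∨ ¬((wheelGraph m).Adj x z ↔ (wheelGraph m).Adj y z) := by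
  rw [resSet, Finset.mem_filter]
  simp only [Finset.mem_univ, true_and]
  rw [wheel_dist, wheel_dist]
  by_cases h1 : x = z <;> by_cases h2 : y = z <;>
    by_cases h3 : (wheelGraph m).Adj x z <;> by_cases h4 : (wheelGraph m).Adj y z <;>
    simp_all [eq_comm (a := z)]

lemma resSet_comm [Fintype V] (G : SimpleGraph V) (x y : V) :
    resSet G x y = resSet G y x := by
  unfold resSet; apply Finset.filter_congr; intro z _; simp [ne_comm]

lemma mod2 (x n : ℕ) (h : x < 2*n) : x % n = if x < n then x else x - n := by
  split_ifs with h1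
  · exact Nat.mod_eq_of_lt h1
  · rw [Nat.mod_eq_sub_mod (le_of_not_gt h1), Nat.mod_eq_of_lt (by omega)]

def NA (m a b : ℕ) : Prop :=
  b = a + 1 ∨ a = b + 1 ∨ (b + 1 = m ∧ a = 0) ∨ (a + 1 = m ∧ b = 0)

instance (m a b : ℕ) : Decidable (NA m a b) := by unfold NA; infer_instance

lemma cyc_adj_iff {m : ℕ} (hm : 2 ≤ m) (u v : Fin m) :
    (cycleGraph m).Adj u v ↔ NA m u.val v.val := by
  rw [cycleGraph_adj']
  have hu := u.isLt; have hv := v.isLt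
  rw [Fin.sub_def, Fin.sub_def]
  simp only [NA]
  rw [mod2 _ _ (by omega), mod2 _ _ (by omega)]
  split_ifs <;> omega

/-- rim vertex from a natural number -/
def nb (m : ℕ) [NeZero m] (a : ℕ) : Fin m :=
  ⟨a % m, Nat.mod_lt _ (Nat.pos_of_ne_zero (NeZero.ne m))⟩

@[simp] lemma nb_val (m : ℕ) [NeZero m] (a : ℕ) : (nb m a).val = a % m := rfl

lemma mem_resSet_ss {m : ℕ} (hm : 2 ≤ m) {u v w : Fin m} (huv : u ≠ v) :
    some w ∈ resSet (wheelGraph m) (some u) (some v) ↔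
      (w.val = u.val ∨ w.val = v.val ∨ ¬(NA m u.val w.val ↔ NA m v.val w.val)) := by
  rw [mem_resSet (by simpa using huv)]
  simp only [Option.some.injEq, adj_some_some, cyc_adj_iff hm, Fin.ext_iff, NA]
  all_goals omega

lemma none_notMem_ss {m : ℕ} {u v : Fin m} (huv : u ≠ v) :
    none ∉ resSet (wheelGraph m) (some u) (some v) := by
  rw [mem_resSet (by simpa using huv)]
  push_neg
  refine ⟨by simp, by simp, ?_⟩
  constructor <;> intro <;>
    [exact (adj_none_some m v).symm; exact (adj_none_some m u).symm]

lemma mem_resSet_ns {m : ℕ} (hm : 2 ≤ m) {u w : Fin m} :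
    some w ∈ resSet (wheelGraph m) none (some u) ↔
      (w.val = u.val ∨ ¬ NA m u.val w.val) := by
  rw [mem_resSet (by simp)]
  simp only [Option.some.injEq, adj_some_some, cyc_adj_iff hm, Fin.ext_iff, NA,
    adj_none_some, true_iff, iff_true_intro (adj_none_some m w)]
  simp only [reduceCtorEq, false_or]
  all_goals omega

lemma none_mem_ns {m : ℕ} (u : Fin m) :
    none ∈ resSet (wheelGraph m) none (some u) := by
  rw [mem_resSet (by simp)]; exact Or.inl rfl


/-- linearized cyclic adjacency for arguments < 2m -/
def NAL (m X Y : ℕ) : Prop :=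
  Y + m = X + 1 ∨ Y = X + 1 ∨ X + m = Y + 1 ∨ X = Y + 1 ∨ Y = X + 1 + m ∨ X = Y + 1 + m ∨
    Y + 2*m = X + 1 ∨ X + 2*m = Y + 1

/-- linearized equality mod m for arguments < 2m -/
def EQL (m X Y : ℕ) : Prop := X = Y ∨ X = Y + m ∨ Y = X + m

lemma eq_mod {m X Y : ℕ} (hX : X < 2*m) (hY : Y < 2*m) :
    X % m = Y % m ↔ EQL m X Y := by
  rcases Nat.eq_zero_or_pos m with rfl | hm
  · simp only [EQL]; omega
  simp only [EQL]
  rw [mod2 X m hX, mod2 Y m hY]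
  split_ifs <;> omega

lemma NA_mod {m : ℕ} (hm : 2 ≤ m) {X Y : ℕ} (hX : X < 2*m) (hY : Y < 2*m) :
    NA m (X % m) (Y % m) ↔ NAL m X Y := by
  simp only [NA, NAL]
  rw [mod2 X m hX, mod2 Y m hY]
  split_ifs <;> omega

section M6
variable {m : ℕ} [NeZero m]

lemma nb_self (w : Fin m) : nb m w.val = w := Fin.ext (Nat.mod_eq_of_lt w.isLt)

lemma nb_eq {X Y : ℕ} (hX : X < 2*m) (hY : Y < 2*m) : nb m X = nb m Y ↔ EQL m X Y := by
  rw [Fin.ext_iff, nb_val, nb_val, eq_mod hX hY]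

lemma snb_ne (X Y : ℕ) (hX : X < 2*m) (hY : Y < 2*m)
    (h : ¬(X = Y ∨ X = Y + m ∨ Y = X + m)) :
    (some (nb m X) : Option (Fin m)) ≠ some (nb m Y) := by
  intro he
  exact h ((nb_eq hX hY).1 (by simpa using he))

lemma mem_ss_nb (hm2 : 2 ≤ m) {A B W : ℕ} (hA : A < 2*m) (hB : B < 2*m) (hW : W < 2*m)
    (hne : nb m A ≠ nb m B) :
    some (nb m W) ∈ resSet (wheelGraph m) (some (nb m A)) (some (nb m B)) ↔
      (EQL m W A ∨ EQL m W B ∨ ¬(NAL m A W ↔ NAL m B W)) := by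
  rw [mem_resSet_ss hm2 hne]
  simp only [nb_val]
  rw [eq_mod hW hA, eq_mod hW hB, NA_mod hm2 hA hW, NA_mod hm2 hB hW]

lemma mem_ss_of (hm2 : 2 ≤ m) (A B W : ℕ) (hA : A < 2*m) (hB : B < 2*m) (hW : W < 2*m)
    (hne : nb m A ≠ nb m B)
    (h : EQL m W A ∨ EQL m W B ∨ ¬(NAL m A W ↔ NAL m B W)) :
    some (nb m W) ∈ resSet (wheelGraph m) (some (nb m A)) (some (nb m B)) :=
  (mem_ss_nb hm2 hA hB hW hne).2 h

lemma mem_ns_nb (hm2 : 2 ≤ m) {A W : ℕ} (hA : A < 2*m) (hW : W < 2*m) :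
    some (nb m W) ∈ resSet (wheelGraph m) none (some (nb m A)) ↔
      (EQL m W A ∨ ¬ NAL m A W) := by
  rw [mem_resSet_ns hm2]
  simp only [nb_val]
  rw [eq_mod hW hA, NA_mod hm2 hA hW]

lemma mem_ns_of (hm2 : 2 ≤ m) (A W : ℕ) (hA : A < 2*m) (hW : W < 2*m)
    (h : EQL m W A ∨ ¬ NAL m A W) :
    some (nb m W) ∈ resSet (wheelGraph m) none (some (nb m A)) :=
  (mem_ns_nb hm2 hA hW).2 h

end M6

lemma card_quad {α : Type*} [DecidableEq α] {a b c d : α} (h1 : a ≠ b) (h2 : a ≠ c)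
    (h3 : a ≠ d) (h4 : b ≠ c) (h5 : b ≠ d) (h6 : c ≠ d) :
    ({a, b, c, d} : Finset α).card = 4 := by
  rw [card_insert_of_notMem (by simp [h1, h2, h3]),
    card_insert_of_notMem (by simp [h4, h5]),
    card_insert_of_notMem (by simp [h6]), card_singleton]

lemma sum_quad {α : Type*} [DecidableEq α] {a b c d : α} (g : α → ℝ) (h1 : a ≠ b) (h2 : a ≠ c)
    (h3 : a ≠ d) (h4 : b ≠ c) (h5 : b ≠ d) (h6 : c ≠ d) :
    ∑ z ∈ ({a, b, c, d} : Finset α), g z = g a + (g b + (g c + g d)) := by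
  rw [Finset.sum_insert (by simp [h1, h2, h3]),
    Finset.sum_insert (by simp [h4, h5]),
    Finset.sum_insert (by simp [h6]), Finset.sum_singleton]

section M6b
variable {m : ℕ} [NeZero m]

/-- Exact resolving set for an adjacent rim pair, m ≥ 5. -/
lemma resSet_adj_pair (hm : 5 ≤ m) (a : ℕ) (ha : a < m) :
    resSet (wheelGraph m) (some (nb m a)) (some (nb m (a+1))) =
      ({some (nb m (a+m-1)), some (nb m a), some (nb m (a+1)), some (nb m (a+2))} :
        Finset (Option (Fin m))) := by
  have hm2 : 2 ≤ m := by omega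
  have hne : nb m a ≠ nb m (a+1) := by
    rw [ne_eq, nb_eq (show a < 2*m by omega) (show a+1 < 2*m by omega)]
    simp only [EQL]; omega
  ext z
  match z with
  | none =>
      simp only [Finset.mem_insert, Finset.mem_singleton, reduceCtorEq, or_self,
        iff_false]
      exact none_notMem_ss hne
  | some w =>
      have hw := w.isLt
      rw [← nb_self w]
      rw [mem_ss_nb hm2 (show a < 2*m by omega) (show a+1 < 2*m by omega)
        (show w.val < 2*m by omega) hne]
      simp only [Finset.mem_insert, Finset.mem_singleton, Option.some.injEq,
        nb_eq (show w.val < 2*m by omega) (show a+m-1 < 2*m by omega),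
        nb_eq (show w.val < 2*m by omega) (show a < 2*m by omega),
        nb_eq (show w.val < 2*m by omega) (show a+1 < 2*m by omega),
        nb_eq (show w.val < 2*m by omega) (show a+2 < 2*m by omega)]
      simp only [EQL, NAL]
      omega

lemma subset_adj_pair (hm : 5 ≤ m) (a : ℕ) (ha : a < m) :
    ∃ S : Finset (Option (Fin m)),
      S ⊆ resSet (wheelGraph m) (some (nb m a)) (some (nb m (a+1))) ∧ S.card = 4 ∧
        none ∉ S := by
  refine ⟨_, Finset.Subset.refl _, ?_, ?_⟩
  · rw [resSet_adj_pair hm a ha]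
    refine card_quad ?_ ?_ ?_ ?_ ?_ ?_ <;>
      · apply snb_ne <;> omega
  · rw [resSet_adj_pair hm a ha]
    simp

lemma subset_dist2_pair (hm : 6 ≤ m) (a : ℕ) (ha : a < m) :
    ∃ S : Finset (Option (Fin m)),
      S ⊆ resSet (wheelGraph m) (some (nb m a)) (some (nb m (a+2))) ∧ S.card = 4 ∧
        none ∉ S := by
  have hm2 : 2 ≤ m := by omega
  have hne : nb m a ≠ nb m (a+2) := by
    rw [ne_eq, nb_eq (show a < 2*m by omega) (show a+2 < 2*m by omega)]
    simp only [EQL]; omega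
  refine ⟨{some (nb m (a+m-1)), some (nb m a), some (nb m (a+2)), some (nb m (a+3))},
    ?_, ?_, by simp⟩
  · have mm0 := mem_ss_of hm2 (a) (a+2) (a+m-1) (by omega) (by omega) (by omega) hne
      (by simp only [EQL, NAL, eq_self_iff_true, true_or, or_true, true_iff, iff_true, not_true]; all_goals omega)
    have mm1 := mem_ss_of hm2 (a) (a+2) (a) (by omega) (by omega) (by omega) hne
      (by simp only [EQL, NAL, eq_self_iff_true, true_or, or_true, true_iff, iff_true, not_true]; all_goals omega)
    have mm2 := mem_ss_of hm2 (a) (a+2) (a+2) (by omega) (by omega) (by omega) hne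
      (by simp only [EQL, NAL, eq_self_iff_true, true_or, or_true, true_iff, iff_true, not_true]; all_goals omega)
    have mm3 := mem_ss_of hm2 (a) (a+2) (a+3) (by omega) (by omega) (by omega) hne
      (by simp only [EQL, NAL, eq_self_iff_true, true_or, or_true, true_iff, iff_true, not_true]; all_goals omega)
    intro z hz
    simp only [Finset.mem_insert, Finset.mem_singleton] at hz
    rcases hz with rfl | rfl | rfl | rfl <;> assumption
  · refine card_quad ?_ ?_ ?_ ?_ ?_ ?_ <;>
      · apply snb_ne <;> omega

lemma subset_gen_pair (hm : 6 ≤ m) (a b : ℕ) (ha : a < m) (hb : b < m)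
    (h3 : a + 3 ≤ b) (h4 : b + 3 ≤ a + m) :
    ∃ S : Finset (Option (Fin m)),
      S ⊆ resSet (wheelGraph m) (some (nb m a)) (some (nb m b)) ∧ S.card = 4 ∧
        none ∉ S := by
  have hm2 : 2 ≤ m := by omega
  have hne : nb m a ≠ nb m b := by
    rw [ne_eq, nb_eq (show a < 2*m by omega) (show b < 2*m by omega)]
    simp only [EQL]; omega
  refine ⟨{some (nb m a), some (nb m (a+1)), some (nb m b), some (nb m (b+1))},
    ?_, ?_, by simp⟩
  · have mm0 := mem_ss_of hm2 (a) (b) (a) (by omega) (by omega) (by omega) hne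
      (by simp only [EQL, NAL, eq_self_iff_true, true_or, or_true, true_iff, iff_true, not_true]; all_goals omega)
    have mm1 := mem_ss_of hm2 (a) (b) (a+1) (by omega) (by omega) (by omega) hne
      (by simp only [EQL, NAL, eq_self_iff_true, true_or, or_true, true_iff, iff_true, not_true]; all_goals omega)
    have mm2 := mem_ss_of hm2 (a) (b) (b) (by omega) (by omega) (by omega) hne
      (by simp only [EQL, NAL, eq_self_iff_true, true_or, or_true, true_iff, iff_true, not_true]; all_goals omega)
    have mm3 := mem_ss_of hm2 (a) (b) (b+1) (by omega) (by omega) (by omega) hne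
      (by simp only [EQL, NAL, eq_self_iff_true, true_or, or_true, true_iff, iff_true, not_true]; all_goals omega)
    intro z hz
    simp only [Finset.mem_insert, Finset.mem_singleton] at hz
    rcases hz with rfl | rfl | rfl | rfl <;> assumption
  · refine card_quad ?_ ?_ ?_ ?_ ?_ ?_ <;>
      · apply snb_ne <;> omega

lemma subset_hub_pair (hm : 6 ≤ m) (a : ℕ) (ha : a < m) :
    ∃ S : Finset (Option (Fin m)),
      S ⊆ resSet (wheelGraph m) none (some (nb m a)) ∧ S.card = 4 ∧ none ∉ S := by
  have hm2 : 2 ≤ m := by omega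
  refine ⟨{some (nb m a), some (nb m (a+2)), some (nb m (a+3)), some (nb m (a+m-2))},
    ?_, ?_, by simp⟩
  · have mm0 := mem_ns_of hm2 (a) (a) (by omega) (by omega)
      (by simp only [EQL, NAL, eq_self_iff_true, true_or, or_true, true_iff, iff_true, not_true]; all_goals omega)
    have mm1 := mem_ns_of hm2 (a) (a+2) (by omega) (by omega)
      (by simp only [EQL, NAL, eq_self_iff_true, true_or, or_true, true_iff, iff_true, not_true]; all_goals omega)
    have mm2 := mem_ns_of hm2 (a) (a+3) (by omega) (by omega)
      (by simp only [EQL, NAL, eq_self_iff_true, true_or, or_true, true_iff, iff_true, not_true]; all_goals omega)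
    have mm3 := mem_ns_of hm2 (a) (a+m-2) (by omega) (by omega)
      (by simp only [EQL, NAL, eq_self_iff_true, true_or, or_true, true_iff, iff_true, not_true]; all_goals omega)
    intro z hz
    simp only [Finset.mem_insert, Finset.mem_singleton] at hz
    rcases hz with rfl | rfl | rfl | rfl <;> assumption
  · refine card_quad ?_ ?_ ?_ ?_ ?_ ?_ <;>
      · apply snb_ne <;> omega

lemma exists_rim4 (hm : 6 ≤ m) {x y : Option (Fin m)} (hxy : x ≠ y) :
    ∃ S : Finset (Option (Fin m)),
      S ⊆ resSet (wheelGraph m) x y ∧ S.card = 4 ∧ none ∉ S := by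
  have keyss : ∀ a b : ℕ, a < m → b < m → a < b →
      ∃ S : Finset (Option (Fin m)),
        S ⊆ resSet (wheelGraph m) (some (nb m a)) (some (nb m b)) ∧ S.card = 4 ∧
          none ∉ S := by
    intro a b ha hb hab
    rcases (show b = a + 1 ∨ b = a + 2 ∨ b + 1 = a + m ∨ b + 2 = a + m ∨
        (a + 3 ≤ b ∧ b + 3 ≤ a + m) by omega) with h | h | h | h | ⟨h1, h2⟩
    · subst h; exact subset_adj_pair (by omega) a ha
    · subst h; exact subset_dist2_pair hm a ha
    · obtain ⟨S, hS, hc, hn⟩ := subset_adj_pair (show 5 ≤ m by omega) b hb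
      have he : nb m (b+1) = nb m a := by
        rw [nb_eq (show b+1 < 2*m by omega) (show a < 2*m by omega)]
        simp only [EQL]; omega
      rw [he, resSet_comm] at hS
      exact ⟨S, hS, hc, hn⟩
    · obtain ⟨S, hS, hc, hn⟩ := subset_dist2_pair hm b hb
      have he : nb m (b+2) = nb m a := by
        rw [nb_eq (show b+2 < 2*m by omega) (show a < 2*m by omega)]
        simp only [EQL]; omega
      rw [he, resSet_comm] at hS
      exact ⟨S, hS, hc, hn⟩
    · exact subset_gen_pair hm a b ha hb h1 h2
  match x, y with
  | none, none => exact absurd rfl hxy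
  | none, some u => simpa [nb_self] using subset_hub_pair hm u.val u.isLt
  | some u, none =>
      obtain ⟨S, hS, hc, hn⟩ := subset_hub_pair hm u.val u.isLt
      rw [nb_self, resSet_comm] at hS
      exact ⟨S, hS, hc, hn⟩
  | some u, some v =>
      have huv : u.val ≠ v.val := by
        intro h
        exact hxy (congrArg some (Fin.ext h))
      rcases Nat.lt_or_ge u.val v.val with h | h
      · obtain ⟨S, hS, hc, hn⟩ := keyss u.val v.val u.isLt v.isLt h
        rw [nb_self, nb_self] at hS
        exact ⟨S, hS, hc, hn⟩
      · obtain ⟨S, hS, hc, hn⟩ := keyss v.val u.val v.isLt u.isLt (by omega)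
        rw [nb_self, nb_self, resSet_comm] at hS
        exact ⟨S, hS, hc, hn⟩

end M6b

section FKD
variable [Fintype V] {G : SimpleGraph V} {k : ℝ}

lemma fracKDim_le {g : V → ℝ} (h : IsKResolving G k g) : fracKDim G k ≤ ∑ v, g v :=
  csInf_le ⟨0, fun s ⟨g', hg', hs⟩ => hs ▸ Finset.sum_nonneg (fun v _ => (hg'.1 v).1)⟩
    ⟨g, h, rfl⟩

lemma le_fracKDim {c : ℝ} (hne : ∃ g : V → ℝ, IsKResolving G k g)
    (h : ∀ g : V → ℝ, IsKResolving G k g → c ≤ ∑ v, g v) : c ≤ fracKDim G k := by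
  obtain ⟨g, hg⟩ := hne
  exact le_csInf ⟨_, g, hg, rfl⟩ (fun s ⟨g', hg', hs⟩ => hs ▸ h g' hg')

lemma kappa_eq {c : ℕ} (hmem : ∃ x y : V, x ≠ y ∧ (resSet G x y).card = c)
    (hlow : ∀ x y : V, x ≠ y → c ≤ (resSet G x y).card) : kappa G = c := by
  refine le_antisymm (Nat.sInf_le ⟨_, _, hmem.choose_spec.choose_spec⟩) ?_
  refine le_csInf ⟨c, _, _, hmem.choose_spec.choose_spec⟩ ?_
  rintro n ⟨x, y, hxy, rfl⟩
  exact hlow x y hxy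

end FKD

/-- helper : sum of a nonneg function over a set is at least t*c when the set
contains at least t rim vertices with value ≥ c -/
lemma sum_ge_of_rim {m : ℕ} {R : Finset (Option (Fin m))} {g : Option (Fin m) → ℝ}
    {c : ℝ} (hc : 0 ≤ c) (hg0 : ∀ z, 0 ≤ g z) (hgc : ∀ w : Fin m, c ≤ g (some w))
    {t : ℕ} (ht : t ≤ ((R.filter (fun z => z ≠ none)).card)) :
    (t : ℝ) * c ≤ ∑ z ∈ R, g z := by
  have h1 : ∑ z ∈ R.filter (fun z => z ≠ none), g z ≤ ∑ z ∈ R, g z :=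
    Finset.sum_le_sum_of_subset_of_nonneg (Finset.filter_subset _ _)
      (fun z _ _ => hg0 z)
  have h2 : ∑ z ∈ R.filter (fun z => z ≠ none), c ≤
      ∑ z ∈ R.filter (fun z => z ≠ none), g z := by
    refine Finset.sum_le_sum ?_
    intro z hz
    rcases z with _ | w
    · simp at hz
    · exact hgc w
  rw [Finset.sum_const, nsmul_eq_mul] at h2
  have h3 : (t : ℝ) * c ≤ ((R.filter (fun z => z ≠ none)).card : ℝ) * c := by
    apply mul_le_mul_of_nonneg_right _ hc
    exact_mod_cast ht
  linarith

section BIG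
variable {m : ℕ} [NeZero m]

lemma sum_shift (t : ℕ) (f : Fin m → ℝ) :
    ∑ i : Fin m, f (nb m (i.val + t)) = ∑ w : Fin m, f w := by
  apply Fintype.sum_bijective (fun i : Fin m => nb m (i.val + t))
  · rw [Finite.injective_iff_bijective.symm]
    intro i j hij
    have h : (i.val + t) % m = (j.val + t) % m := by
      simpa [nb, Fin.ext_iff] using hij
    have h2 : i.val % m = j.val % m := Nat.ModEq.add_right_cancel' t h
    rw [Nat.mod_eq_of_lt i.isLt, Nat.mod_eq_of_lt j.isLt] at h2
    exact Fin.ext h2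
  · intro i; rfl

/-- the uniform k/4 rim function -/
noncomputable def gtop (m : ℕ) (k : ℝ) : Option (Fin m) → ℝ := fun z =>
  match z with
  | none => 0
  | some _ => k / 4

@[simp] lemma gtop_none (k : ℝ) : gtop m k none = 0 := rfl
@[simp] lemma gtop_some (k : ℝ) (w : Fin m) : gtop m k (some w) = k / 4 := rfl

lemma gtop_resolving (hm : 6 ≤ m) {k : ℝ} (hk1 : 1 ≤ k) (hk4 : k ≤ 4) :
    IsKResolving (wheelGraph m) k (gtop m k) := by
  constructor
  · intro v
    rcases v with _ | w
    · rw [gtop_none]; constructor <;> norm_num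
    · rw [gtop_some]; constructor <;> linarith
  · intro x y hxy
    obtain ⟨S, hS, hc, hn⟩ := exists_rim4 hm hxy
    have hsub : S ⊆ (resSet (wheelGraph m) x y).filter (fun z => z ≠ none) := by
      intro z hz
      rw [Finset.mem_filter]
      exact ⟨hS hz, fun h => hn (h ▸ hz)⟩
    have ht : 4 ≤ ((resSet (wheelGraph m) x y).filter (fun z => z ≠ none)).card := by
      rw [← hc]; exact Finset.card_le_card hsub
    have := sum_ge_of_rim (m := m) (R := resSet (wheelGraph m) x y)
      (g := gtop m k) (c := k/4) (by linarith)
      (fun z => by rcases z with _ | w <;> simp [gtop_none, gtop_some] <;> all_goals linarith)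
      (fun w => le_of_eq (gtop_some k w).symm) ht
    calc k = (4 : ℝ) * (k/4) := by ring
    _ ≤ _ := by exact_mod_cast this

lemma sum_gtop (k : ℝ) : ∑ v, gtop m k v = (m : ℝ) * (k/4) := by
  rw [Fintype.sum_option]
  simp only [gtop_none, gtop_some]
  rw [Finset.sum_const, nsmul_eq_mul]
  simp

lemma lower_big (hm : 6 ≤ m) {k : ℝ} {g : Option (Fin m) → ℝ}
    (hg : IsKResolving (wheelGraph m) k g) : (m : ℝ) * (k/4) ≤ ∑ v, g v := by
  have hpair : ∀ i : Fin m, k ≤ g (some (nb m (i.val + (m-1)))) + (g (some (nb m (i.val + 0))) +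
      (g (some (nb m (i.val + 1))) + g (some (nb m (i.val + 2))))) := by
    intro i
    have ha : i.val < m := i.isLt
    have hne : (some (nb m i.val) : Option (Fin m)) ≠ some (nb m (i.val + 1)) := by
      apply snb_ne <;> omega
    have hres := hg.2 _ _ hne
    rw [resSet_adj_pair (by omega) i.val ha] at hres
    rw [sum_quad g (by apply snb_ne <;> omega) (by apply snb_ne <;> omega)
      (by apply snb_ne <;> omega) (by apply snb_ne <;> omega)
      (by apply snb_ne <;> omega) (by apply snb_ne <;> omega)] at hres
    have e1 : i.val + m - 1 = i.val + (m-1) := by omega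
    have e2 : i.val = i.val + 0 := by omega
    rw [e1] at hres
    rw [show (nb m i.val) = nb m (i.val + 0) by rw [← e2]] at hres
    exact hres
  have hsum := Finset.sum_le_sum (fun i (_ : i ∈ Finset.univ) => hpair i)
  rw [Finset.sum_const, nsmul_eq_mul, Finset.card_univ, Fintype.card_fin] at hsum
  simp only [Finset.sum_add_distrib] at hsum
  rw [sum_shift (m-1) (fun w => g (some w)), sum_shift 0 (fun w => g (some w)),
    sum_shift 1 (fun w => g (some w)), sum_shift 2 (fun w => g (some w))] at hsum
  have hnn : 0 ≤ g none := (hg.1 none).1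
  rw [Fintype.sum_option]
  set s := ∑ w : Fin m, g (some w)
  nlinarith [hsum]

lemma kappa_big (hm : 6 ≤ m) : kappa (wheelGraph m) = 4 := by
  apply kappa_eq
  · refine ⟨some (nb m 0), some (nb m 1), by apply snb_ne <;> omega, ?_⟩
    rw [show (nb m 1) = nb m (0 + 1) by norm_num]
    rw [resSet_adj_pair (by omega) 0 (by omega)]
    refine card_quad ?_ ?_ ?_ ?_ ?_ ?_ <;> (apply snb_ne <;> omega)
  · intro x y hxy
    obtain ⟨S, hS, hc, _⟩ := exists_rim4 hm hxy
    calc 4 = S.card := hc.symm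
    _ ≤ _ := Finset.card_le_card hS

lemma frac_big (hm : 6 ≤ m) {k : ℝ} (hk1 : 1 ≤ k) (hk4 : k ≤ 4) :
    fracKDim (wheelGraph m) k = (m : ℝ) * k / 4 := by
  apply le_antisymm
  · have := fracKDim_le (gtop_resolving hm hk1 hk4)
    rw [sum_gtop] at this
    linarith
  · have := le_fracKDim ⟨gtop m k, gtop_resolving hm hk1 hk4⟩
      (fun g hg => lower_big hm hg)
    linarith

end BIG

def rpred (m : ℕ) (x y : Option (Fin m)) : Option (Fin m) → Prop :=
  fun z => z = x ∨ z = y ∨ ¬((wheelGraph m).Adj x z ↔ (wheelGraph m).Adj y z)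

instance (m : ℕ) (x y : Option (Fin m)) : DecidablePred (rpred m x y) := by
  unfold rpred; infer_instance

lemma resSet_small {m : ℕ} (x y : Option (Fin m)) (hxy : x ≠ y) :
    resSet (wheelGraph m) x y = Finset.univ.filter (rpred m x y) := by
  ext z
  rw [mem_resSet hxy, Finset.mem_filter, rpred]
  simp

lemma kappa4 : kappa (wheelGraph 4) = 2 := by
  apply kappa_eq
  · refine ⟨some 0, some 2, by decide, ?_⟩
    rw [resSet_small _ _ (by decide)]
    decide
  · intro x y hxy
    rw [resSet_small x y hxy]
    exact (by decide : ∀ x y : Option (Fin 4), x ≠ y →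
      2 ≤ (Finset.univ.filter (rpred 4 x y)).card) x y hxy

lemma kappa5 : kappa (wheelGraph 5) = 4 := by
  apply kappa_eq
  · refine ⟨some 0, some 1, by decide, ?_⟩
    rw [resSet_small _ _ (by decide)]
    decide
  · intro x y hxy
    rw [resSet_small x y hxy]
    exact (by decide : ∀ x y : Option (Fin 5), x ≠ y →
      4 ≤ (Finset.univ.filter (rpred 5 x y)).card) x y hxy

lemma frac4 {k : ℝ} (hk1 : 1 ≤ k) (hk2 : k ≤ 2) :
    fracKDim (wheelGraph 4) k = 2 * k := by
  set g : Option (Fin 4) → ℝ := fun z => if z = none then 0 else k/2 with hgdef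
  have hres : IsKResolving (wheelGraph 4) k g := by
    constructor
    · intro v
      rcases v with _ | w <;> simp [hgdef] <;> constructor <;> linarith
    · intro x y hxy
      have hcard : 2 ≤ (((resSet (wheelGraph 4) x y)).filter (fun z => z ≠ none)).card := by
        rw [resSet_small x y hxy]
        exact (by decide : ∀ x y : Option (Fin 4), x ≠ y →
          2 ≤ ((Finset.univ.filter (rpred 4 x y)).filter (fun z => z ≠ none)).card) x y hxy
      have := sum_ge_of_rim (m := 4) (R := resSet (wheelGraph 4) x y) (g := g)
        (c := k/2) (by linarith)
        (fun z => by rcases z with _ | w <;> simp [hgdef] <;> all_goals linarith)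
        (fun w => by simp [hgdef]) hcard
      calc k = (2:ℝ) * (k/2) := by ring
      _ ≤ _ := by exact_mod_cast this
  apply le_antisymm
  · have := fracKDim_le hres
    have hsum : ∑ v, g v = 2 * k := by
      rw [Fintype.sum_option]
      simp [hgdef, Finset.sum_const]
      ring
    linarith [hsum ▸ this]
  · refine le_fracKDim ⟨g, hres⟩ ?_
    intro f hf
    have h02 := hf.2 (some 0) (some 2) (by decide)
    rw [resSet_small _ _ (by decide),
      (by decide : Finset.univ.filter (rpred 4 (some 0) (some 2)) = {some 0, some 2}),
      Finset.sum_pair (by decide)] at h02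
    have h13 := hf.2 (some 1) (some 3) (by decide)
    rw [resSet_small _ _ (by decide),
      (by decide : Finset.univ.filter (rpred 4 (some 1) (some 3)) = {some 1, some 3}),
      Finset.sum_pair (by decide)] at h13
    have hnn := (hf.1 none).1
    rw [Fintype.sum_option, Fin.sum_univ_four]
    linarith

lemma frac5 {k : ℝ} (hk1 : 1 ≤ k) (hk4 : k ≤ 4) :
    fracKDim (wheelGraph 5) k = 3 * k / 2 := by
  set g : Option (Fin 5) → ℝ := fun _ => k/4 with hgdef
  have hres : IsKResolving (wheelGraph 5) k g := by
    constructor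
    · intro v
      constructor <;> simp [hgdef] <;> linarith
    · intro x y hxy
      have hcard : 4 ≤ ((resSet (wheelGraph 5) x y)).card := by
        rw [resSet_small x y hxy]
        exact (by decide : ∀ x y : Option (Fin 5), x ≠ y →
          4 ≤ (Finset.univ.filter (rpred 5 x y)).card) x y hxy
      have : ∑ z ∈ resSet (wheelGraph 5) x y, g z =
          ((resSet (wheelGraph 5) x y).card : ℝ) * (k/4) := by
        simp [hgdef, Finset.sum_const, nsmul_eq_mul]
      rw [this]
      have hc4 : (4:ℝ) ≤ ((resSet (wheelGraph 5) x y).card : ℝ) := by exact_mod_cast hcard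
      nlinarith
  apply le_antisymm
  · have := fracKDim_le hres
    have hsum : ∑ v, g v = 3 * k / 2 := by
      simp [hgdef, Finset.sum_const, nsmul_eq_mul]
      ring
    linarith [hsum ▸ this]
  · refine le_fracKDim ⟨g, hres⟩ ?_
    intro f hf
    have c0 := hf.2 (some 0) (some 2) (by decide)
    rw [resSet_small _ _ (by decide),
      (by decide : Finset.univ.filter (rpred 5 (some 0) (some 2)) = {some 0, some 2, some 3, some 4}),
      sum_quad f (by decide) (by decide) (by decide) (by decide) (by decide) (by decide)] at c0
    have c1 := hf.2 (some 1) (some 3) (by decide)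
    rw [resSet_small _ _ (by decide),
      (by decide : Finset.univ.filter (rpred 5 (some 1) (some 3)) = {some 1, some 3, some 4, some 0}),
      sum_quad f (by decide) (by decide) (by decide) (by decide) (by decide) (by decide)] at c1
    have c2 := hf.2 (some 2) (some 4) (by decide)
    rw [resSet_small _ _ (by decide),
      (by decide : Finset.univ.filter (rpred 5 (some 2) (some 4)) = {some 2, some 4, some 0, some 1}),
      sum_quad f (by decide) (by decide) (by decide) (by decide) (by decide) (by decide)] at c2
    have c3 := hf.2 (some 3) (some 0) (by decide)
    rw [resSet_small _ _ (by decide),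
      (by decide : Finset.univ.filter (rpred 5 (some 3) (some 0)) = {some 3, some 0, some 1, some 2}),
      sum_quad f (by decide) (by decide) (by decide) (by decide) (by decide) (by decide)] at c3
    have c4 := hf.2 (some 4) (some 1) (by decide)
    rw [resSet_small _ _ (by decide),
      (by decide : Finset.univ.filter (rpred 5 (some 4) (some 1)) = {some 4, some 1, some 2, some 3}),
      sum_quad f (by decide) (by decide) (by decide) (by decide) (by decide) (by decide)] at c4
    have d0 := hf.2 none (some 0) (by decide)
    rw [resSet_small _ _ (by decide),
      (by decide : Finset.univ.filter (rpred 5 none (some 0)) = {none, some 0, some 2, some 3}),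
      sum_quad f (by decide) (by decide) (by decide) (by decide) (by decide) (by decide)] at d0
    have d1 := hf.2 none (some 1) (by decide)
    rw [resSet_small _ _ (by decide),
      (by decide : Finset.univ.filter (rpred 5 none (some 1)) = {none, some 1, some 3, some 4}),
      sum_quad f (by decide) (by decide) (by decide) (by decide) (by decide) (by decide)] at d1
    have d2 := hf.2 none (some 2) (by decide)
    rw [resSet_small _ _ (by decide),
      (by decide : Finset.univ.filter (rpred 5 none (some 2)) = {none, some 2, some 4, some 0}),
      sum_quad f (by decide) (by decide) (by decide) (by decide) (by decide) (by decide)] at d2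
    have d3 := hf.2 none (some 3) (by decide)
    rw [resSet_small _ _ (by decide),
      (by decide : Finset.univ.filter (rpred 5 none (some 3)) = {none, some 3, some 0, some 1}),
      sum_quad f (by decide) (by decide) (by decide) (by decide) (by decide) (by decide)] at d3
    have d4 := hf.2 none (some 4) (by decide)
    rw [resSet_small _ _ (by decide),
      (by decide : Finset.univ.filter (rpred 5 none (some 4)) = {none, some 4, some 1, some 2}),
      sum_quad f (by decide) (by decide) (by decide) (by decide) (by decide) (by decide)] at d4
    rw [Fintype.sum_option, Fin.sum_univ_five]
    linarith

end FracDim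

open FracDim in
/-- For the wheel graph `W_n` (`n ≥ 5`): `κ(W₅) = 2` and `κ(W_n) = 4` for `n ≥ 6`;
`dim_f^k(W₅) = 2k` for `k ∈ [1,2]`; `dim_f^k(W₆) = 3k/2` for `k ∈ [1,4]`; and for
`n ≥ 7`, `dim_f^k(W_n) = k(n−1)/4` for `k ∈ [1,4]`. -/
theorem fracKDim_wheel :
    kappa (wheelGraph 4) = 2 ∧
      (∀ n : ℕ, 6 ≤ n → kappa (wheelGraph (n - 1)) = 4) ∧
      (∀ k : ℝ, 1 ≤ k → k ≤ 2 → fracKDim (wheelGraph 4) k = 2 * k) ∧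
      (∀ k : ℝ, 1 ≤ k → k ≤ 4 → fracKDim (wheelGraph 5) k = 3 * k / 2) ∧
      (∀ n : ℕ, 7 ≤ n → ∀ k : ℝ, 1 ≤ k → k ≤ 4 →
        fracKDim (wheelGraph (n - 1)) k = k * ((n : ℝ) - 1) / 4) := by
  refine ⟨kappa4, ?_, fun k hk1 hk2 => frac4 hk1 hk2, fun k hk1 hk4 => frac5 hk1 hk4, ?_⟩
  · intro n hn
    by_cases h6 : n = 6
    · subst h6; exact kappa5
    · haveI : NeZero (n - 1) := ⟨by omega⟩
      exact kappa_big (by omega)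
  · intro n hn k hk1 hk4
    haveI : NeZero (n - 1) := ⟨by omega⟩
    rw [frac_big (by omega) hk1 hk4]
    have : ((n - 1 : ℕ) : ℝ) = (n : ℝ) - 1 := by
      have : (1:ℕ) ≤ n := by omega
      push_cast [Nat.cast_sub this]
      ring
    rw [this]; ring
end
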